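/- arXiv:1407.8336 — 3 statements merged into one kernel-verified Lean document; each statement's English description precedes it below -/
import Mathlib

section
/- Let G be a finite simple connected graph of order 10 with maximum degree at most 4 and minimum degree exactly 3, which is not isomorphic to C₅², such that the set of vertices of degree 3 is an independent set and no vertex of degree 3 is contained in a triangle. Then ν_s(G) ≥ 2. -/
open SimpleGraph

universe u

/-- The graph obtained from a 5-cycle by blowing up each vertex into an
independent set of size 2: parts indexed by `ZMod 5`, consecutive parts
completely joined. -/
def C5Sq : SimpleGraph (ZMod 5 × Fin 2) :=
  SimpleGraph.fromRel (fun a b => a.1 = b.1 + 1)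

/-- `M` is an induced matching of `G`: a set of edges of `G` such that no two
edges of `M` share an endpoint and no edge of `G` joins endpoints of two
distinct edges of `M`. -/
def IsInducedMatching {V : Type*} (G : SimpleGraph V) (M : Finset (Sym2 V)) : Prop :=
  (M : Set (Sym2 V)) ⊆ G.edgeSet ∧
    ∀ e ∈ M, ∀ f ∈ M, e ≠ f → ∀ a ∈ e, ∀ b ∈ f, a ≠ b ∧ ¬ G.Adj a b

/-- The strong (induced) matching number of `G`. -/
noncomputable def strongMatchingNumber {V : Type*} (G : SimpleGraph V) : ℕ :=
  sSup {k | ∃ M : Finset (Sym2 V), IsInducedMatching G M ∧ M.card = k}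

/-- The degree of a vertex. -/
noncomputable def deg {V : Type*} (G : SimpleGraph V) (v : V) : ℕ :=
  (G.neighborSet v).ncard

/-- The number of isolated vertices of `G`. -/
noncomputable def numIsolated {V : Type*} (G : SimpleGraph V) : ℕ :=
  {v : V | ∀ w, ¬ G.Adj v w}.ncard

/-- The number of connected components of `G` isomorphic to `C5Sq`. -/
noncomputable def numC5SqComponents {V : Type*} (G : SimpleGraph V) : ℕ :=
  {c : G.ConnectedComponent | Nonempty (G.induce c.supp ≃g C5Sq)}.ncard

/-- `G` is a minimum counterexample: connected, maximum degree at most 4,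
no isolated vertices, not isomorphic to `C5Sq`, with `9·ν_s(G) < n(G)`,
while every graph of smaller order and maximum degree at most 4 satisfies
`9·ν_s(H) ≥ n(H) − i(H) − n₅(H)`. -/
def MinCounterexample {V : Type u} [Fintype V] (G : SimpleGraph V) : Prop :=
  G.Connected ∧ (∀ v, deg G v ≤ 4) ∧ (∀ v, ∃ w, G.Adj v w) ∧
    IsEmpty (G ≃g C5Sq) ∧
    9 * strongMatchingNumber G < Fintype.card V ∧
    ∀ (W : Type u) [Fintype W] (H : SimpleGraph W),
      Fintype.card W < Fintype.card V → (∀ w, deg H w ≤ 4) →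
      (Fintype.card W : ℤ) - numIsolated H - numC5SqComponents H ≤
        9 * strongMatchingNumber H

set_option linter.unusedSectionVars false
set_option linter.unusedVariables false
open Finset in
lemma deg_eq {V : Type*} [Fintype V] (G : SimpleGraph V) [DecidableRel G.Adj] (v : V) :
    deg G v = (G.neighborFinset v).card := by
  rw [deg, ← Nat.card_coe_set_eq, Nat.card_eq_fintype_card,
    SimpleGraph.card_neighborSet_eq_degree, SimpleGraph.degree]


open Finset in
lemma two_le_sm {V : Type u} [Fintype V] (G : SimpleGraph V) {x1 x2 y1 y2 : V}
    (e1 : G.Adj x1 x2) (e2 : G.Adj y1 y2)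
    (d11 : x1 ≠ y1) (d12 : x1 ≠ y2) (d21 : x2 ≠ y1) (d22 : x2 ≠ y2)
    (n11 : ¬G.Adj x1 y1) (n12 : ¬G.Adj x1 y2) (n21 : ¬G.Adj x2 y1) (n22 : ¬G.Adj x2 y2) :
    2 ≤ strongMatchingNumber G := by
  classical
  set M : Finset (Sym2 V) := {s(x1,x2), s(y1,y2)} with hM
  have hne : (s(x1,x2) : Sym2 V) ≠ s(y1,y2) := by
    intro h
    rcases Sym2.eq_iff.mp h with ⟨h1, h2⟩ | ⟨h1, h2⟩
    · exact d11 h1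
    · exact d12 h1
  have hmem : 2 ∈ {k | ∃ M : Finset (Sym2 V), IsInducedMatching G M ∧ M.card = k} := by
    refine ⟨M, ⟨?_, ?_⟩, ?_⟩
    · intro e he
      simp only [hM, Finset.coe_insert, Finset.coe_singleton, Set.mem_insert_iff,
        Set.mem_singleton_iff] at he
      rcases he with rfl | rfl
      · exact e1
      · exact e2
    · intro e he f hf hef p hp q hq
      simp only [hM, Finset.mem_insert, Finset.mem_singleton] at he hf
      rcases he with rfl | rfl <;> rcases hf with rfl | rfl <;>
        [skip; skip; skip; skip] <;>
        first
        | exact absurd rfl hef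
        | (rw [Sym2.mem_iff] at hp hq
           rcases hp with rfl | rfl <;> rcases hq with rfl | rfl <;>
             refine ⟨?_, ?_⟩ <;>
             first
               | assumption
               | exact Ne.symm (by assumption)
               | exact fun h => absurd h.symm (by assumption))
    · rw [hM, Finset.card_insert_of_notMem (by simp [hne]), Finset.card_singleton]
  have hbdd : BddAbove {k | ∃ M : Finset (Sym2 V), IsInducedMatching G M ∧ M.card = k} := by
    refine ⟨Fintype.card (Sym2 V), ?_⟩
    rintro k ⟨N, _, rfl⟩
    exact Finset.card_le_univ N
  exact le_csSup hbdd hmem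

lemma dblcount {V : Type*} [Fintype V] [DecidableEq V] (G : SimpleGraph V) [DecidableRel G.Adj]
    (S T : Finset V) :
    ∑ z ∈ S, (G.neighborFinset z ∩ T).card = ∑ y ∈ T, (G.neighborFinset y ∩ S).card := by
  have key : ∀ (S T : Finset V), ∑ z ∈ S, (G.neighborFinset z ∩ T).card
      = ∑ z ∈ S, ∑ y ∈ T, if G.Adj z y then 1 else 0 := by
    intro S T
    refine Finset.sum_congr rfl fun z _ => ?_
    rw [show G.neighborFinset z ∩ T = T.filter (fun y => G.Adj z y) by
      ext y; simp [SimpleGraph.mem_neighborFinset, and_comm]]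
    rw [Finset.card_filter]
  rw [key, key, Finset.sum_comm]
  refine Finset.sum_congr rfl fun y _ => Finset.sum_congr rfl fun z _ => ?_
  simp [SimpleGraph.adj_comm]

lemma key_lemma {V : Type*} [Fintype V] [DecidableEq V] (G : SimpleGraph V) [DecidableRel G.Adj]
    (hconf : ∀ x1 x2 y1 y2 : V, G.Adj x1 x2 → G.Adj y1 y2 →
      x1 = y1 ∨ x1 = y2 ∨ x2 = y1 ∨ x2 = y2 ∨
      G.Adj x1 y1 ∨ G.Adj x1 y2 ∨ G.Adj x2 y1 ∨ G.Adj x2 y2)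
    (v p q r : V) (hNv : G.neighborFinset v = {p, q, r})
    {x y : V} (hxv : x ≠ v) (hxp : x ≠ p) (hxq : x ≠ q) (hxr : x ≠ r)
    (hxP : x ∉ (G.neighborFinset p).erase v) (hxy : G.Adj x y) :
    y = q ∨ y = r ∨ y ∈ (G.neighborFinset p).erase v := by
  have hvp : G.Adj v p := by
    rw [← SimpleGraph.mem_neighborFinset, hNv]; simp
  have hvx : ¬ G.Adj v x := by
    intro h
    have : x ∈ G.neighborFinset v := by rwa [SimpleGraph.mem_neighborFinset]
    rw [hNv] at this; simp only [Finset.mem_insert, Finset.mem_singleton] at this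
    tauto
  have hpx : ¬ G.Adj p x := by
    intro h
    exact hxP (by rw [Finset.mem_erase, SimpleGraph.mem_neighborFinset]; exact ⟨hxv, h⟩)
  rcases hconf v p x y hvp hxy with h|h|h|h|h|h|h|h
  · exact absurd h.symm hxv
  · subst h; exact absurd hxy.symm hvx
  · exact absurd h.symm hxp
  · subst h; exact absurd hxy.symm hpx
  · exact absurd h hvx
  · -- Adj v y
    have : y ∈ G.neighborFinset v := by rwa [SimpleGraph.mem_neighborFinset]
    rw [hNv] at this; simp only [Finset.mem_insert, Finset.mem_singleton] at this
    rcases this with rfl | rfl | rfl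
    · exact absurd hxy.symm hpx
    · exact Or.inl rfl
    · exact Or.inr (Or.inl rfl)
  · exact absurd h hpx
  · -- Adj p y
    by_cases hyv : y = v
    · subst hyv; exact absurd hxy.symm hvx
    · exact Or.inr (Or.inr (by rw [Finset.mem_erase, SimpleGraph.mem_neighborFinset]; exact ⟨hyv, h⟩))

section helpers
variable {V : Type*} [Fintype V] [DecidableEq V] (G : SimpleGraph V) [DecidableRel G.Adj]

lemma single_bound
    (hconf : ∀ x1 x2 y1 y2 : V, G.Adj x1 x2 → G.Adj y1 y2 →
      x1 = y1 ∨ x1 = y2 ∨ x2 = y1 ∨ x2 = y2 ∨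
      G.Adj x1 y1 ∨ G.Adj x1 y2 ∨ G.Adj x2 y1 ∨ G.Adj x2 y2)
    (v p q r : V) (hNv : G.neighborFinset v = {p, q, r})
    (hpq : ¬ G.Adj p q) (hpr : ¬ G.Adj p r)
    (hpq' : p ≠ q) (hpr' : p ≠ r) (hqr' : q ≠ r)
    (hdeg3 : ∀ z, 3 ≤ (G.neighborFinset z).card)
    {x : V} (hxv : x ≠ v) (hxp : x ≠ p) (hxq : x ≠ q) (hxr : x ≠ r)
    (hxQ : x ∉ (G.neighborFinset q).erase v) (hxR : x ∉ (G.neighborFinset r).erase v) :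
    2 ≤ ((G.neighborFinset q).erase v ∩ (G.neighborFinset r).erase v).card := by
  have hNvq : G.neighborFinset v = {q, p, r} := by rw [hNv]; ext z; simp; tauto
  have hNvr : G.neighborFinset v = {r, p, q} := by rw [hNv]; ext z; simp; tauto
  have hsub : G.neighborFinset x ⊆
      insert p ((G.neighborFinset q).erase v ∩ (G.neighborFinset r).erase v) := by
    intro y hy
    have hxy : G.Adj x y := by rwa [SimpleGraph.mem_neighborFinset] at hy
    have k1 := key_lemma G hconf v q p r hNvq hxv hxq hxp hxr hxQ hxy
    have k2 := key_lemma G hconf v r p q hNvr hxv hxr hxp hxq hxR hxy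
    rcases k1 with rfl | rfl | h1
    · exact Finset.mem_insert_self _ _
    · rcases k2 with h2 | h2 | h2
      · exact absurd h2.symm hpr'
      · exact absurd h2.symm hqr'
      · rw [Finset.mem_erase, SimpleGraph.mem_neighborFinset] at h2
        exact absurd h2.2 (G.irrefl)
    · have hadjq : G.Adj q y := by
        rw [Finset.mem_erase, SimpleGraph.mem_neighborFinset] at h1; exact h1.2
      rcases k2 with rfl | rfl | h2
      · exact absurd hadjq.symm hpq
      · exact absurd hadjq (G.irrefl)
      · exact Finset.mem_insert_of_mem (Finset.mem_inter.mpr ⟨h1, h2⟩)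
  have h1 := hdeg3 x
  have h2 := Finset.card_le_card hsub
  have h3 := Finset.card_insert_le p
    ((G.neighborFinset q).erase v ∩ (G.neighborFinset r).erase v)
  omega

lemma twosingles (P Q R O : Finset V) (hPO : P ⊆ O) (hQO : Q ⊆ O) (hRO : R ⊆ O)
    (hOc : O.card = 6) (hPc : P.card = 3) (hQc : Q.card = 3) (hRc : R.card = 3)
    (hcov : O ⊆ P ∪ Q ∪ R)
    (h1 : 2 ≤ (P ∩ Q).card) (h2 : 2 ≤ (P ∩ R).card) : False := by
  have e0 : P ∪ Q ∪ R = O :=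
    Finset.Subset.antisymm (Finset.union_subset (Finset.union_subset hPO hQO) hRO) hcov
  have e1 := Finset.card_union_add_card_inter (P ∪ Q) R
  have e2 := Finset.card_union_add_card_inter P Q
  have e3 : (P ∪ Q) ∩ R = (P ∩ R) ∪ (Q ∩ R) := Finset.union_inter_distrib_right P Q R
  have e4 := Finset.card_union_add_card_inter (P ∩ R) (Q ∩ R)
  have e5 : (P ∩ R) ∩ (Q ∩ R) = P ∩ Q ∩ R := by ext z; simp
  have e6 : (P ∩ Q ∩ R).card ≤ (Q ∩ R).card :=
    Finset.card_le_card (by intro z hz; simp at hz ⊢; tauto)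
  rw [e0, e3] at e1
  rw [e5] at e4
  omega

lemma endgame
    (hconf : ∀ x1 x2 y1 y2 : V, G.Adj x1 x2 → G.Adj y1 y2 →
      x1 = y1 ∨ x1 = y2 ∨ x2 = y1 ∨ x2 = y2 ∨
      G.Adj x1 y1 ∨ G.Adj x1 y2 ∨ G.Adj x2 y1 ∨ G.Adj x2 y2)
    (hdeg4 : ∀ z, (G.neighborFinset z).card ≤ 4)
    (v p q r : V)
    (hpq : ¬ G.Adj p q) (hqr' : q ≠ r) (hpq' : p ≠ q)
    (P Q R O : Finset V)
    (hP : P = (G.neighborFinset p).erase v)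
    (hQ : Q = (G.neighborFinset q).erase v)
    (hR : R = (G.neighborFinset r).erase v)
    (hPO : P ⊆ O) (hQO : Q ⊆ O) (hRO : R ⊆ O)
    (hPc : P.card = 3) (hQc : Q.card = 3) (hRc : R.card = 3)
    (hO : O = Finset.univ \ {v, p, q, r}) (hOc : O.card = 6)
    (hcov : O ⊆ P ∪ Q ∪ R)
    (hnoQ : ∀ x ∈ Q, x ∈ P ∨ x ∈ R)
    (hnoR : ∀ x ∈ R, x ∈ P ∨ x ∈ Q) : False := by
  have hqO : q ∉ O := by rw [hO]; simp
  have hrO : r ∉ O := by rw [hO]; simp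
  have hpO : p ∉ O := by rw [hO]; simp
  have hvO : v ∉ O := by rw [hO]; simp
  -- card computation forcing Q = R and P disjoint from Q ∪ R
  have n1 := Finset.card_union_add_card_inter Q R
  have n2 := Finset.card_union_add_card_inter P (Q ∪ R)
  have n3 : P ∪ (Q ∪ R) = O := by
    refine Finset.Subset.antisymm (Finset.union_subset hPO (Finset.union_subset hQO hRO)) ?_
    intro z hz
    have := hcov hz
    rw [Finset.union_assoc] at this
    exact this
  have n4 : (Q ∪ R).card ≤ (P ∩ (Q ∪ R)).card + (Q ∩ R).card := by
    have hsub : Q ∪ R ⊆ (P ∩ (Q ∪ R)) ∪ (Q ∩ R) := by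
      intro z hz
      rcases Finset.mem_union.mp hz with hzQ | hzR
      · rcases hnoQ z hzQ with h | h
        · exact Finset.mem_union_left _ (Finset.mem_inter.mpr ⟨h, hz⟩)
        · exact Finset.mem_union_right _ (Finset.mem_inter.mpr ⟨hzQ, h⟩)
      · rcases hnoR z hzR with h | h
        · exact Finset.mem_union_left _ (Finset.mem_inter.mpr ⟨h, hz⟩)
        · exact Finset.mem_union_right _ (Finset.mem_inter.mpr ⟨h, hzR⟩)
    calc (Q ∪ R).card ≤ ((P ∩ (Q ∪ R)) ∪ (Q ∩ R)).card := Finset.card_le_card hsub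
      _ ≤ _ := Finset.card_union_le _ _
  have n5 : (Q ∩ R).card ≤ 3 := hQc ▸ Finset.card_le_card (Finset.inter_subset_left)
  rw [n3] at n2
  have hQRc : (Q ∩ R).card = 3 := by omega
  have hPdisj : (P ∩ (Q ∪ R)).card = 0 := by omega
  have hQR : Q = R := by
    have h1 : Q ∩ R = Q := Finset.eq_of_subset_of_card_le Finset.inter_subset_left (by omega)
    have h2 : Q ∩ R = R := Finset.eq_of_subset_of_card_le Finset.inter_subset_right (by omega)
    rw [← h1, h2]
  have hdisjPQ : ∀ z ∈ P, z ∉ Q := by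
    intro z hzP hzQ
    have : z ∈ P ∩ (Q ∪ R) := Finset.mem_inter.mpr ⟨hzP, Finset.mem_union_left _ hzQ⟩
    have := Finset.card_pos.mpr ⟨z, this⟩
    omega
  -- double counting
  have dbl := dblcount G P Q
  have hRHS : ∑ y ∈ Q, (G.neighborFinset y ∩ P).card ≤ 6 := by
    calc ∑ y ∈ Q, (G.neighborFinset y ∩ P).card ≤ ∑ _y ∈ Q, 2 := by
          refine Finset.sum_le_sum fun y hy => ?_
          have hqy : G.Adj q y := by
            rw [hQ] at hy; rw [Finset.mem_erase, SimpleGraph.mem_neighborFinset] at hy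
            exact hy.2
          have hry : G.Adj r y := by
            have hy' : y ∈ R := hQR ▸ hy
            rw [hR] at hy'; rw [Finset.mem_erase, SimpleGraph.mem_neighborFinset] at hy'
            exact hy'.2
          have hsub : (G.neighborFinset y ∩ P) ∪ {q, r} ⊆ G.neighborFinset y := by
            intro z hz
            rcases Finset.mem_union.mp hz with h | h
            · exact Finset.mem_inter.mp h |>.1
            · simp only [Finset.mem_insert, Finset.mem_singleton] at h
              rcases h with rfl | rfl
              · rw [SimpleGraph.mem_neighborFinset]; exact hqy.symm
              · rw [SimpleGraph.mem_neighborFinset]; exact hry.symm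
          have hdisj : Disjoint (G.neighborFinset y ∩ P) ({q, r} : Finset V) := by
            rw [Finset.disjoint_right]
            intro z hz hz'
            simp only [Finset.mem_insert, Finset.mem_singleton] at hz
            have hzP : z ∈ P := (Finset.mem_inter.mp hz').2
            rcases hz with rfl | rfl
            · exact hqO (hPO hzP)
            · exact hrO (hPO hzP)
          have hcd := Finset.card_le_card hsub
          rw [Finset.card_union_of_disjoint hdisj] at hcd
          have : ({q, r} : Finset V).card = 2 := by
            rw [Finset.card_insert_of_notMem (by simp [hqr']), Finset.card_singleton]
          rw [this] at hcd
          have := hdeg4 y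
          omega
      _ = 6 := by rw [Finset.sum_const, hQc]; simp
  have hex : ∃ x ∈ P, ∃ y ∈ Q, ¬ G.Adj x y := by
    by_contra hall
    push_neg at hall
    have hLHS : ∑ x ∈ P, (G.neighborFinset x ∩ Q).card = 9 := by
      have : ∀ x ∈ P, (G.neighborFinset x ∩ Q).card = 3 := by
        intro x hx
        have : G.neighborFinset x ∩ Q = Q := by
          apply Finset.inter_eq_right.mpr
          intro y hy
          rw [SimpleGraph.mem_neighborFinset]
          exact hall x hx y hy
        rw [this, hQc]
      rw [Finset.sum_congr rfl this, Finset.sum_const, hPc]; simp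
    rw [hLHS] at dbl
    omega
  obtain ⟨x, hxP, y, hyQ, hnxy⟩ := hex
  have hpx : G.Adj p x := by
    rw [hP] at hxP; rw [Finset.mem_erase, SimpleGraph.mem_neighborFinset] at hxP
    exact hxP.2
  have hqy : G.Adj q y := by
    rw [hQ] at hyQ; rw [Finset.mem_erase, SimpleGraph.mem_neighborFinset] at hyQ
    exact hyQ.2
  have hxO : x ∈ O := hPO hxP
  have hyO : y ∈ O := hQO hyQ
  rcases hconf p x q y hpx hqy with h|h|h|h|h|h|h|h
  · exact hpq' h
  · exact hpO (h ▸ hyO)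
  · exact hqO (h ▸ hxO)
  · exact hdisjPQ x hxP (h ▸ hyQ)
  · exact hpq h
  · -- Adj p y : y ∈ P ∪ {v}
    have : y ∈ G.neighborFinset p := by rwa [SimpleGraph.mem_neighborFinset]
    have hyv : y ≠ v := fun hv => hvO (hv ▸ hyO)
    have : y ∈ P := by rw [hP, Finset.mem_erase]; exact ⟨hyv, this⟩
    exact hdisjPQ y this hyQ
  · -- Adj x q
    have : x ∈ G.neighborFinset q := by
      rw [SimpleGraph.mem_neighborFinset]; exact h.symm
    have hxv : x ≠ v := fun hv => hvO (hv ▸ hxO)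
    have : x ∈ Q := by rw [hQ, Finset.mem_erase]; exact ⟨hxv, this⟩
    exact hdisjPQ x hxP this
  · exact hnxy h

end helpers

set_option maxHeartbeats 3000000 in
/-- A connected graph of order 10 with maximum degree at most 4
and minimum degree exactly 3, not isomorphic to `C5Sq`, in which the set of
degree-3 vertices is independent and no degree-3 vertex lies in a triangle,
has strong matching number at least 2. -/
theorem stmt4 {V : Type u} [Fintype V] (G : SimpleGraph V)
    (hconn : G.Connected) (hcard : Fintype.card V = 10)
    (hdeg : ∀ v, deg G v ≤ 4)
    (hmin : ∀ v, 3 ≤ deg G v) (hmin' : ∃ v, deg G v = 3)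
    (hnotC5 : IsEmpty (G ≃g C5Sq))
    (hind : ∀ u w, deg G u = 3 → deg G w = 3 → ¬ G.Adj u w)
    (htri : ∀ v a b, deg G v = 3 → ¬ (G.Adj v a ∧ G.Adj v b ∧ G.Adj a b)) :
    2 ≤ strongMatchingNumber G := by
  classical
  by_contra hlt
  have hconf : ∀ x1 x2 y1 y2 : V, G.Adj x1 x2 → G.Adj y1 y2 →
      x1 = y1 ∨ x1 = y2 ∨ x2 = y1 ∨ x2 = y2 ∨
      G.Adj x1 y1 ∨ G.Adj x1 y2 ∨ G.Adj x2 y1 ∨ G.Adj x2 y2 := by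
    intro x1 x2 y1 y2 h1 h2
    by_contra hc
    push_neg at hc
    obtain ⟨d11, d12, d21, d22, n11, n12, n21, n22⟩ := hc
    exact hlt (two_le_sm G h1 h2 d11 d12 d21 d22 n11 n12 n21 n22)
  have hdeg3 : ∀ z, 3 ≤ (G.neighborFinset z).card := fun z => (deg_eq G z) ▸ hmin z
  have hdeg4 : ∀ z, (G.neighborFinset z).card ≤ 4 := fun z => (deg_eq G z) ▸ hdeg z
  obtain ⟨v, hv3⟩ := hmin'
  have hv3' : (G.neighborFinset v).card = 3 := (deg_eq G v) ▸ hv3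
  obtain ⟨a, b, c, hab, hac, hbc, hNv⟩ := Finset.card_eq_three.mp hv3'
  have hva : G.Adj v a := by rw [← SimpleGraph.mem_neighborFinset, hNv]; simp
  have hvb : G.Adj v b := by rw [← SimpleGraph.mem_neighborFinset, hNv]; simp
  have hvc : G.Adj v c := by rw [← SimpleGraph.mem_neighborFinset, hNv]; simp
  have hAdjab : ¬ G.Adj a b := fun h => htri v a b hv3 ⟨hva, hvb, h⟩
  have hAdjac : ¬ G.Adj a c := fun h => htri v a c hv3 ⟨hva, hvc, h⟩
  have hAdjbc : ¬ G.Adj b c := fun h => htri v b c hv3 ⟨hvb, hvc, h⟩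
  have hdeg4' : ∀ z, G.Adj v z → (G.neighborFinset z).card = 4 := by
    intro z hz
    have h1 := hdeg z
    have h2 := hmin z
    have h3 : deg G z ≠ 3 := fun h => hind v z hv3 h hz
    have e := deg_eq G z
    omega
  have hdega : (G.neighborFinset a).card = 4 := hdeg4' a hva
  have hdegb : (G.neighborFinset b).card = 4 := hdeg4' b hvb
  have hdegc : (G.neighborFinset c).card = 4 := hdeg4' c hvc
  have hav : a ≠ v := fun h => G.irrefl (h ▸ hva)
  have hbv : b ≠ v := fun h => G.irrefl (h ▸ hvb)
  have hcv : c ≠ v := fun h => G.irrefl (h ▸ hvc)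
  set A := (G.neighborFinset a).erase v with hA
  set B := (G.neighborFinset b).erase v with hB
  set C := (G.neighborFinset c).erase v with hC
  have hAc : A.card = 3 := by
    rw [hA, Finset.card_erase_of_mem (by rw [SimpleGraph.mem_neighborFinset]; exact hva.symm), hdega]
  have hBc : B.card = 3 := by
    rw [hB, Finset.card_erase_of_mem (by rw [SimpleGraph.mem_neighborFinset]; exact hvb.symm), hdegb]
  have hCc : C.card = 3 := by
    rw [hC, Finset.card_erase_of_mem (by rw [SimpleGraph.mem_neighborFinset]; exact hvc.symm), hdegc]
  have hmemA : ∀ z, z ∈ A ↔ (z ≠ v ∧ G.Adj a z) := by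
    intro z; rw [hA, Finset.mem_erase, SimpleGraph.mem_neighborFinset]
  have hmemB : ∀ z, z ∈ B ↔ (z ≠ v ∧ G.Adj b z) := by
    intro z; rw [hB, Finset.mem_erase, SimpleGraph.mem_neighborFinset]
  have hmemC : ∀ z, z ∈ C ↔ (z ≠ v ∧ G.Adj c z) := by
    intro z; rw [hC, Finset.mem_erase, SimpleGraph.mem_neighborFinset]
  set O := (Finset.univ : Finset V) \ {v, a, b, c} with hO
  have hScard : ({v, a, b, c} : Finset V).card = 4 := by
    rw [Finset.card_insert_of_notMem (by simp [hav.symm, hbv.symm, hcv.symm]),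
      Finset.card_insert_of_notMem (by simp [hab, hac]),
      Finset.card_insert_of_notMem (by simp [hbc]), Finset.card_singleton]
  have hOc : O.card = 6 := by
    rw [hO, Finset.card_sdiff_of_subset (Finset.subset_univ _), Finset.card_univ, hcard, hScard]
  have hAO : A ⊆ O := by
    intro z hz
    rw [hmemA] at hz
    rw [hO, Finset.mem_sdiff]
    refine ⟨Finset.mem_univ z, ?_⟩
    simp only [Finset.mem_insert, Finset.mem_singleton]
    push_neg
    exact ⟨hz.1, fun h => G.irrefl (h ▸ hz.2), fun h => hAdjab (h ▸ hz.2),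
      fun h => hAdjac (h ▸ hz.2)⟩
  have hBO : B ⊆ O := by
    intro z hz
    rw [hmemB] at hz
    rw [hO, Finset.mem_sdiff]
    refine ⟨Finset.mem_univ z, ?_⟩
    simp only [Finset.mem_insert, Finset.mem_singleton]
    push_neg
    exact ⟨hz.1, fun h => hAdjab ((h ▸ hz.2).symm), fun h => G.irrefl (h ▸ hz.2),
      fun h => hAdjbc (h ▸ hz.2)⟩
  have hCO : C ⊆ O := by
    intro z hz
    rw [hmemC] at hz
    rw [hO, Finset.mem_sdiff]
    refine ⟨Finset.mem_univ z, ?_⟩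
    simp only [Finset.mem_insert, Finset.mem_singleton]
    push_neg
    exact ⟨hz.1, fun h => hAdjac ((h ▸ hz.2).symm), fun h => hAdjbc ((h ▸ hz.2).symm),
      fun h => G.irrefl (h ▸ hz.2)⟩
  have hOmem : ∀ z ∈ O, z ≠ v ∧ z ≠ a ∧ z ≠ b ∧ z ≠ c := by
    intro z hz
    rw [hO, Finset.mem_sdiff] at hz
    have := hz.2
    simp only [Finset.mem_insert, Finset.mem_singleton] at this
    push_neg at this
    exact this
  have haO : a ∉ O := by rw [hO]; simp
  have hbO : b ∉ O := by rw [hO]; simp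
  have hcO : c ∉ O := by rw [hO]; simp
  have hvO : v ∉ O := by rw [hO]; simp
  have hNvb : G.neighborFinset v = {b, a, c} := by rw [hNv]; ext z; simp; tauto
  have hNvc : G.neighborFinset v = {c, a, b} := by rw [hNv]; ext z; simp; tauto
  have keyA : ∀ z y, z ∈ O → z ∉ A → G.Adj z y → y = b ∨ y = c ∨ y ∈ A := by
    intro z y hzO hzA hzy
    obtain ⟨h1, h2, h3, h4⟩ := hOmem z hzO
    exact key_lemma G hconf v a b c hNv h1 h2 h3 h4 hzA hzy
  have keyB : ∀ z y, z ∈ O → z ∉ B → G.Adj z y → y = a ∨ y = c ∨ y ∈ B := by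
    intro z y hzO hzB hzy
    obtain ⟨h1, h2, h3, h4⟩ := hOmem z hzO
    exact key_lemma G hconf v b a c hNvb h1 h3 h2 h4 hzB hzy
  have keyC : ∀ z y, z ∈ O → z ∉ C → G.Adj z y → y = a ∨ y = b ∨ y ∈ C := by
    intro z y hzO hzC hzy
    obtain ⟨h1, h2, h3, h4⟩ := hOmem z hzO
    exact key_lemma G hconf v c a b hNvc h1 h4 h2 h3 hzC hzy
  have hcov : ∀ z ∈ O, z ∈ A ∪ B ∪ C := by
    by_contra hcontra
    push_neg at hcontra
    obtain ⟨x0, hx0O, hx0⟩ := hcontra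
    have hx0A : x0 ∉ A := fun h => hx0 (Finset.mem_union_left _ (Finset.mem_union_left _ h))
    have hx0B : x0 ∉ B := fun h => hx0 (Finset.mem_union_left _ (Finset.mem_union_right _ h))
    have hx0C : x0 ∉ C := fun h => hx0 (Finset.mem_union_right _ h)
    have hsub : ∀ z, z ∈ O → z ∉ A → z ∉ B → z ∉ C → G.neighborFinset z ⊆ A ∩ B ∩ C := by
      intro z hzO hzA hzB hzC y hy
      have hzy : G.Adj z y := by rwa [SimpleGraph.mem_neighborFinset] at hy
      have k1 := keyA z y hzO hzA hzy
      have k2 := keyB z y hzO hzB hzy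
      have k3 := keyC z y hzO hzC hzy
      have hyA : y ∈ A := by
        rcases k1 with rfl | rfl | h
        · rcases k2 with h | h | h
          · exact absurd h.symm hab
          · exact absurd h hbc
          · exact absurd ((hmemB _).mp h).2 (G.irrefl)
        · rcases k3 with h | h | h
          · exact absurd h.symm hac
          · exact absurd h.symm hbc
          · exact absurd ((hmemC _).mp h).2 (G.irrefl)
        · exact h
      have hyB : y ∈ B := by
        rcases k2 with rfl | rfl | h
        · exact absurd ((hmemA _).mp hyA).2 (G.irrefl)
        · exact absurd ((hmemA _).mp hyA).2 hAdjac
        · exact h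
      have hyC : y ∈ C := by
        rcases k3 with rfl | rfl | h
        · exact absurd ((hmemA _).mp hyA).2 (G.irrefl)
        · exact absurd ((hmemA _).mp hyA).2 hAdjab
        · exact h
      exact Finset.mem_inter.mpr ⟨Finset.mem_inter.mpr ⟨hyA, hyB⟩, hyC⟩
    have h3le : 3 ≤ (A ∩ B ∩ C).card :=
      le_trans (hdeg3 x0) (Finset.card_le_card (hsub x0 hx0O hx0A hx0B hx0C))
    have hABCsub : A ∩ B ∩ C ⊆ A := Finset.Subset.trans Finset.inter_subset_left
      Finset.inter_subset_left
    have hABC : A ∩ B ∩ C = A := Finset.eq_of_subset_of_card_le hABCsub (by omega)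
    have hAsubB : A ⊆ B := by
      intro z hz
      rw [← hABC] at hz
      exact (Finset.mem_inter.mp (Finset.mem_inter.mp hz).1).2
    have hAsubC : A ⊆ C := by
      intro z hz
      rw [← hABC] at hz
      exact (Finset.mem_inter.mp hz).2
    have hBA : B = A := (Finset.eq_of_subset_of_card_le hAsubB (by omega)).symm
    have hCA : C = A := (Finset.eq_of_subset_of_card_le hAsubC (by omega)).symm
    set D := O \ A with hD
    have hDc : D.card = 3 := by
      rw [hD, Finset.card_sdiff_of_subset hAO, hOc, hAc]
    have hDsub : ∀ z ∈ D, G.neighborFinset z ⊆ A := by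
      intro z hz
      rw [hD, Finset.mem_sdiff] at hz
      intro y hy
      have := hsub z hz.1 hz.2 (hBA ▸ hz.2) (hCA ▸ hz.2) hy
      rw [hABC] at this
      exact this
    have dbl := dblcount G D A
    have hL : 9 ≤ ∑ z ∈ D, (G.neighborFinset z ∩ A).card := by
      calc (9 : ℕ) = ∑ _z ∈ D, 3 := by rw [Finset.sum_const, hDc]; norm_num
        _ ≤ _ := Finset.sum_le_sum fun z hz => by
            rw [Finset.inter_eq_left.mpr (hDsub z hz)]
            exact hdeg3 z
    have hR : ∑ y ∈ A, (G.neighborFinset y ∩ D).card ≤ 3 := by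
      calc ∑ y ∈ A, (G.neighborFinset y ∩ D).card ≤ ∑ _y ∈ A, 1 := by
            refine Finset.sum_le_sum fun y hy => ?_
            have hya : G.Adj y a := ((hmemA _).mp hy).2.symm
            have hyb : G.Adj y b := ((hmemB _).mp (hBA ▸ hy)).2.symm
            have hyc : G.Adj y c := ((hmemC _).mp (hCA ▸ hy)).2.symm
            have hsub2 : (G.neighborFinset y ∩ D) ∪ {a, b, c} ⊆ G.neighborFinset y := by
              intro z hz
              rcases Finset.mem_union.mp hz with h | h
              · exact (Finset.mem_inter.mp h).1
              · simp only [Finset.mem_insert, Finset.mem_singleton] at h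
                rcases h with rfl | rfl | rfl
                · rwa [SimpleGraph.mem_neighborFinset]
                · rwa [SimpleGraph.mem_neighborFinset]
                · rwa [SimpleGraph.mem_neighborFinset]
            have hdisj2 : Disjoint (G.neighborFinset y ∩ D) ({a, b, c} : Finset V) := by
              rw [Finset.disjoint_right]
              intro z hz hz'
              simp only [Finset.mem_insert, Finset.mem_singleton] at hz
              have hzD : z ∈ D := (Finset.mem_inter.mp hz').2
              have hzO : z ∈ O := (Finset.mem_sdiff.mp (hD ▸ hzD)).1
              rcases hz with rfl | rfl | rfl
              · exact haO hzO
              · exact hbO hzO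
              · exact hcO hzO
            have hcd := Finset.card_le_card hsub2
            rw [Finset.card_union_of_disjoint hdisj2] at hcd
            have h3 : ({a, b, c} : Finset V).card = 3 := by
              rw [Finset.card_insert_of_notMem (by simp [hab, hac]),
                Finset.card_insert_of_notMem (by simp [hbc]), Finset.card_singleton]
            rw [h3] at hcd
            have := hdeg4 y
            omega
        _ = 3 := by rw [Finset.sum_const, hAc]; norm_num
    omega
  have hcovU : O ⊆ A ∪ B ∪ C := fun z hz => hcov z hz
  -- case analysis on singles
  by_cases hPA : ∃ x, x ∈ A ∧ x ∉ B ∧ x ∉ C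
  · obtain ⟨x, hxA, hxB, hxC⟩ := hPA
    obtain ⟨hx1, hx2, hx3, hx4⟩ := hOmem x (hAO hxA)
    have hBC2 : 2 ≤ (B ∩ C).card := by
      have := single_bound G hconf v a b c hNv hAdjab hAdjac hab hac hbc hdeg3
        hx1 hx2 hx3 hx4 hxB hxC
      rwa [← hB, ← hC] at this
    by_cases hPB : ∃ x, x ∈ B ∧ x ∉ A ∧ x ∉ C
    · obtain ⟨y, hyB, hyA, hyC⟩ := hPB
      obtain ⟨hy1, hy2, hy3, hy4⟩ := hOmem y (hBO hyB)
      have hAC2 : 2 ≤ (A ∩ C).card := by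
        have := single_bound G hconf v b a c hNvb (fun h => hAdjab h.symm) hAdjbc
          hab.symm hbc hac hdeg3 hy1 hy3 hy2 hy4 hyA hyC
        rwa [← hA, ← hC] at this
      refine twosingles C B A O hCO hBO hAO hOc hCc hBc hAc ?_ ?_ ?_
      · intro z hz
        have := hcov z hz
        simp only [Finset.mem_union] at this ⊢
        tauto
      · rwa [Finset.inter_comm]
      · rwa [Finset.inter_comm]
    · by_cases hPC : ∃ x, x ∈ C ∧ x ∉ A ∧ x ∉ B
      · obtain ⟨y, hyC, hyA, hyB⟩ := hPC
        obtain ⟨hy1, hy2, hy3, hy4⟩ := hOmem y (hCO hyC)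
        have hAB2 : 2 ≤ (A ∩ B).card := by
          have := single_bound G hconf v c a b hNvc (fun h => hAdjac h.symm)
            (fun h => hAdjbc h.symm) hac.symm hbc.symm hab hdeg3 hy1 hy4 hy2 hy3 hyA hyB
          rwa [← hA, ← hB] at this
        refine twosingles B C A O hBO hCO hAO hOc hBc hCc hAc ?_ ?_ ?_
        · intro z hz
          have := hcov z hz
          simp only [Finset.mem_union] at this ⊢
          tauto
        · exact hBC2
        · rwa [Finset.inter_comm]
      · -- endgame role a
        push_neg at hPB hPC
        exact endgame G hconf hdeg4 v a b c hAdjab hbc hab A B C O hA hB hC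
          hAO hBO hCO hAc hBc hCc hO hOc hcovU
          (fun z hz => by
            by_cases h : z ∈ A
            · exact Or.inl h
            · exact Or.inr (hPB z hz h))
          (fun z hz => by
            by_cases h : z ∈ A
            · exact Or.inl h
            · exact Or.inr (hPC z hz h))
  · push_neg at hPA
    by_cases hPB : ∃ x, x ∈ B ∧ x ∉ A ∧ x ∉ C
    · obtain ⟨y, hyB, hyA, hyC⟩ := hPB
      obtain ⟨hy1, hy2, hy3, hy4⟩ := hOmem y (hBO hyB)
      have hAC2 : 2 ≤ (A ∩ C).card := by
        have := single_bound G hconf v b a c hNvb (fun h => hAdjab h.symm) hAdjbc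
          hab.symm hbc hac hdeg3 hy1 hy3 hy2 hy4 hyA hyC
        rwa [← hA, ← hC] at this
      by_cases hPC : ∃ x, x ∈ C ∧ x ∉ A ∧ x ∉ B
      · obtain ⟨z, hzC, hzA, hzB⟩ := hPC
        obtain ⟨hz1, hz2, hz3, hz4⟩ := hOmem z (hCO hzC)
        have hAB2 : 2 ≤ (A ∩ B).card := by
          have := single_bound G hconf v c a b hNvc (fun h => hAdjac h.symm)
            (fun h => hAdjbc h.symm) hac.symm hbc.symm hab hdeg3 hz1 hz4 hz2 hz3 hzA hzB
          rwa [← hA, ← hB] at this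
        exact twosingles A B C O hAO hBO hCO hOc hAc hBc hCc hcovU hAB2 hAC2
      · -- endgame role b
        push_neg at hPC
        have hO' : O = Finset.univ \ {v, b, a, c} := by
          rw [hO]; ext z; simp; tauto
        exact endgame G hconf hdeg4 v b a c (fun h => hAdjab h.symm) hac hab.symm B A C O
          hB hA hC hBO hAO hCO hBc hAc hCc hO' hOc
          (fun z hz => by
            have := hcov z hz
            simp only [Finset.mem_union] at this ⊢
            tauto)
          (fun z hz => by
            by_cases h : z ∈ B
            · exact Or.inl h
            · exact Or.inr (hPA z hz h))
          (fun z hz => by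
            by_cases h : z ∈ A
            · exact Or.inr h
            · exact Or.inl (hPC z hz h))
    · -- endgame role c
      push_neg at hPB
      have hO' : O = Finset.univ \ {v, c, a, b} := by
        rw [hO]; ext z; simp; tauto
      exact endgame G hconf hdeg4 v c a b (fun h => hAdjac h.symm) hab hac.symm C A B O
        hC hA hB hCO hAO hBO hCc hAc hBc hO' hOc
        (fun z hz => by
          have := hcov z hz
          simp only [Finset.mem_union] at this ⊢
          tauto)
        (fun z hz => by
          by_cases h : z ∈ B
          · exact Or.inr h
          · exact Or.inl (hPA z hz h))
        (fun z hz => by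
          by_cases h : z ∈ A
          · exact Or.inr h
          · exact Or.inl (hPB z hz h))
end

section
/- If G is a minimum counterexample, then every vertex of G of degree at least 2 is adjacent to at least two vertices of degree at least 2. -/
open SimpleGraph

universe u

/- ## Auxiliary lemmas -/


instance : DecidableRel C5Sq.Adj := fun a b =>
  decidable_of_iff _ (SimpleGraph.fromRel_adj _ a b).symm

lemma c5sq_deg (z : ZMod 5 × Fin 2) : deg C5Sq z = 4 := by
  rw [deg, Set.ncard_eq_toFinset_card']
  revert z; decide

lemma deg_iso {A B : Type*} {G1 : SimpleGraph A} {G2 : SimpleGraph B} (e : G1 ≃g G2) (x : A) :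
    deg G1 x = deg G2 (e x) := by
  rw [deg, deg, ← Nat.card_coe_set_eq, ← Nat.card_coe_set_eq]
  exact Nat.card_congr (e.mapNeighborSet x)

lemma matching_bdd {V : Type*} [Fintype V] (G : SimpleGraph V) :
    BddAbove {k | ∃ M : Finset (Sym2 V), IsInducedMatching G M ∧ M.card = k} := by
  classical
  refine ⟨Fintype.card (Sym2 V), ?_⟩
  rintro k ⟨M, _, rfl⟩
  exact (Finset.card_le_univ M).trans_eq Finset.card_univ

lemma exists_max_matching {V : Type*} [Fintype V] (G : SimpleGraph V) :
    ∃ M : Finset (Sym2 V), IsInducedMatching G M ∧ M.card = strongMatchingNumber G := by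
  have h0 : (0:ℕ) ∈ {k | ∃ M : Finset (Sym2 V), IsInducedMatching G M ∧ M.card = k} :=
    ⟨∅, ⟨by simp, by simp⟩, rfl⟩
  exact Nat.sSup_mem ⟨0, h0⟩ (matching_bdd G)

lemma card_le_strong {V : Type*} [Fintype V] (G : SimpleGraph V) (M : Finset (Sym2 V))
    (h : IsInducedMatching G M) : M.card ≤ strongMatchingNumber G :=
  le_csSup (matching_bdd G) ⟨M, h, rfl⟩

/-- In a minimum counterexample, every vertex of degree at
least 2 is adjacent to at least two vertices of degree at least 2. -/
theorem stmt5 {V : Type u} [Fintype V] (G : SimpleGraph V)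
    (hG : MinCounterexample G) :
    ∀ v, 2 ≤ deg G v → 2 ≤ {w | G.Adj v w ∧ 2 ≤ deg G w}.ncard := by
  classical
  obtain ⟨hconn, hdeg, hnoiso, -, hlt, hmin⟩ := hG
  intro v hv
  by_contra hB
  push_neg at hB
  set B : Set V := {w | G.Adj v w ∧ 2 ≤ deg G w} with hBdef
  -- find a leaf neighbor u of v
  obtain ⟨u, huv, huB⟩ : ∃ u, G.Adj v u ∧ u ∉ B := by
    by_contra h; push_neg at h
    have hsub : G.neighborSet v ⊆ B := fun w hw => h w hw
    have := Set.ncard_le_ncard hsub (Set.toFinite _)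
    rw [deg] at hv; omega
  -- any neighbor of v outside B is a leaf with only neighbor v
  have leaf : ∀ y, G.Adj v y → y ∉ B → ∀ x, G.Adj y x → x = v := by
    intro y hvy hyB x hyx
    by_contra hxv
    refine hyB ⟨hvy, ?_⟩
    have hsub : ({v, x} : Set V) ⊆ G.neighborSet y := by
      rintro z (rfl | rfl)
      · exact hvy.symm
      · exact hyx
    have h2 := Set.ncard_le_ncard hsub (Set.toFinite _)
    rw [Set.ncard_pair (fun h => hxv h.symm)] at h2
    exact h2
  set S : Set V := {x | x ≠ v ∧ ¬ G.Adj v x} with hSdef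
  have hvS : v ∉ S := fun h => h.1 rfl
  have hNS : ∀ x, G.Adj v x → x ∉ S := fun x hx h => h.2 hx
  set H := G.induce S with hHdef
  have hHadj : ∀ a b : S, (H.Adj a b ↔ G.Adj ↑a ↑b) := fun a b => by
    simp [hHdef]
  -- max degree of H
  have hdegH : ∀ x : S, deg H x ≤ 4 := by
    intro x
    have himg : Subtype.val '' (H.neighborSet x) ⊆ G.neighborSet ↑x := by
      rintro _ ⟨y, hy, rfl⟩; exact (hHadj x y).1 hy
    have h1 : (Subtype.val '' (H.neighborSet x)).ncard = deg H x :=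
      Set.ncard_image_of_injective _ Subtype.val_injective
    have h2 := Set.ncard_le_ncard himg (Set.toFinite _)
    calc deg H x = (Subtype.val '' (H.neighborSet x)).ncard := h1.symm
      _ ≤ (G.neighborSet ↑x).ncard := h2
      _ ≤ 4 := hdeg (↑x : V)
  -- cardinalities
  have hcardS : Fintype.card ↥S = S.ncard := by
    rw [← Nat.card_coe_set_eq, Nat.card_eq_fintype_card]
  have hsplit : S.ncard + Sᶜ.ncard = Fintype.card V := by
    rw [Set.ncard_add_ncard_compl, Nat.card_eq_fintype_card]
  have hcpos : 0 < Sᶜ.ncard :=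
    (Set.ncard_pos (Set.toFinite _)).2 ⟨v, hvS⟩
  have hc5 : Sᶜ.ncard ≤ 5 := by
    have hcompl : Sᶜ ⊆ insert v (G.neighborSet v) := by
      intro x hx
      simp only [hSdef, Set.mem_compl_iff, Set.mem_setOf_eq, not_and, not_not] at hx
      by_cases h : x = v
      · exact Set.mem_insert_iff.2 (Or.inl h)
      · exact Set.mem_insert_iff.2 (Or.inr (hx h))
    have h1 := Set.ncard_le_ncard hcompl (Set.toFinite _)
    have h2 := Set.ncard_insert_le v (G.neighborSet v)
    have h3 := hdeg v
    rw [deg] at h3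
    omega
  have hcardlt : Fintype.card ↥S < Fintype.card V := by omega
  -- isolated vertices of H
  have hIkey : ∀ x : S, (∀ w, ¬ H.Adj x w) → ∃ y ∈ B, G.Adj y ↑x := by
    intro x hx
    obtain ⟨y, hy⟩ := hnoiso (↑x : V)
    have hyS : y ∉ S := by
      intro hyS
      exact hx ⟨y, hyS⟩ ((hHadj x ⟨y, hyS⟩).2 hy)
    simp only [hSdef, Set.mem_setOf_eq, not_and, not_not] at hyS
    by_cases hyv : y = v
    · subst hyv
      exact absurd (hNS ↑x hy.symm) (fun h => h x.2)
    · have hvy : G.Adj v y := hyS hyv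
      by_cases hyB : y ∈ B
      · exact ⟨y, hyB, hy.symm⟩
      · exact absurd (leaf y hvy hyB ↑x hy.symm) x.2.1
  have hiso3 : numIsolated H ≤ 3 := by
    rw [numIsolated]
    set I : Set ↥S := {x : ↥S | ∀ w, ¬ H.Adj x w} with hIdef
    rcases I.eq_empty_or_nonempty with hI | ⟨x₀, hx₀⟩
    · rw [hI, Set.ncard_empty]; omega
    · obtain ⟨w, hwB, -⟩ := hIkey x₀ hx₀
      have hBone : ∀ y ∈ B, y = w := by
        intro y hy
        exact (Set.ncard_le_one_iff (Set.toFinite _)).1 (by omega) hy hwB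
      have hIsub : Subtype.val '' I ⊆ G.neighborSet w \ {v} := by
        rintro _ ⟨x, hx, rfl⟩
        obtain ⟨y, hyB, hyx⟩ := hIkey x hx
        rw [hBone y hyB] at hyx
        exact ⟨hyx, fun h => x.2.1 h⟩
      have h1 : (Subtype.val '' I).ncard = I.ncard :=
        Set.ncard_image_of_injective _ Subtype.val_injective
      have h2 := Set.ncard_le_ncard hIsub (Set.toFinite _)
      have h3 : (G.neighborSet w \ {v}).ncard = (G.neighborSet w).ncard - 1 :=
        Set.ncard_diff_singleton_of_mem hwB.1.symm
      have h4 := hdeg w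
      rw [deg] at h4
      have h5 : 1 ≤ (G.neighborSet w).ncard :=
        (Set.ncard_pos (Set.toFinite _)).2 ⟨v, hwB.1.symm⟩
      omega
  -- no C5Sq components in H
  have hC5 : numC5SqComponents H = 0 := by
    rw [numC5SqComponents]
    rw [show {c : H.ConnectedComponent | Nonempty (H.induce c.supp ≃g C5Sq)} = ∅ from ?_,
      Set.ncard_empty]
    rw [Set.eq_empty_iff_forall_notMem]
    rintro c ⟨e⟩
    set T : Set V := Subtype.val '' c.supp with hTdef
    have hTS : ∀ x ∈ T, x ∈ S := by rintro _ ⟨x, -, rfl⟩; exact x.2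
    have hTclosed : ∀ x ∈ T, ∀ y, G.Adj x y → y ∈ T := by
      rintro _ ⟨x, hx, rfl⟩ y hxy
      have hdeg4 : deg (H.induce c.supp) ⟨x, hx⟩ = 4 := by
        rw [deg_iso e]; exact c5sq_deg _
      set g : ↥c.supp → V := fun z => ((z : ↥S) : V) with hgdef
      have hinj : Function.Injective g :=
        Subtype.val_injective.comp Subtype.val_injective
      have himg : g '' ((H.induce c.supp).neighborSet ⟨x, hx⟩) ⊆ G.neighborSet ↑x := by
        rintro _ ⟨z, hz, rfl⟩
        exact (hHadj x z).1 hz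
      have hcardimg : (g '' ((H.induce c.supp).neighborSet ⟨x, hx⟩)).ncard = 4 := by
        rw [Set.ncard_image_of_injective _ hinj]
        exact hdeg4
      have heq : g '' ((H.induce c.supp).neighborSet ⟨x, hx⟩) = G.neighborSet ↑x := by
        refine Set.eq_of_subset_of_ncard_le himg ?_ (Set.toFinite _)
        rw [hcardimg]
        have := hdeg (↑x : V); rw [deg] at this; exact this
      have : y ∈ g '' ((H.induce c.supp).neighborSet ⟨x, hx⟩) := heq ▸ hxy
      obtain ⟨z, hz, rfl⟩ := this
      exact ⟨↑z, z.2, rfl⟩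
    have hwalk : ∀ (a b : V) (_ : G.Walk a b), a ∈ T → b ∈ T := by
      intro a b p
      induction p with
      | nil => exact id
      | cons h q ih => exact fun ha => ih (hTclosed _ ha _ h)
    set x₀ : ↥c.supp := e.symm (0, 0) with hx₀def
    have hx₀T : ((x₀ : ↥S) : V) ∈ T := ⟨↑x₀, x₀.2, rfl⟩
    obtain ⟨p⟩ := hconn.preconnected ((x₀ : ↥S) : V) v
    exact hvS (hTS v (hwalk _ _ p hx₀T))
  -- build larger induced matching in G
  obtain ⟨M₀, hM₀, hM₀card⟩ := exists_max_matching H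
  set f : Sym2 ↥S → Sym2 V := Sym2.map Subtype.val with hfdef
  have hfinj : Function.Injective f := Sym2.map.injective Subtype.val_injective
  have hmemS : ∀ (a : V) (e0 : Sym2 ↥S), a ∈ f e0 → a ∈ S := by
    intro a e0 ha
    obtain ⟨a', -, rfl⟩ := Sym2.mem_map.1 ha
    exact a'.2
  have huS : u ∉ S := hNS u huv
  have hvu_not : s(v, u) ∉ M₀.image f := by
    intro h
    obtain ⟨e0, -, heq⟩ := Finset.mem_image.1 h
    exact hvS (hmemS v e0 (heq ▸ Sym2.mem_mk_left v u))
  set M : Finset (Sym2 V) := insert s(v, u) (M₀.image f) with hMdef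
  have hcross : ∀ a : V, a ∈ (s(v, u) : Sym2 V) → ∀ b ∈ S, a ≠ b ∧ ¬ G.Adj a b := by
    have hv' : ∀ b ∈ S, v ≠ b ∧ ¬ G.Adj v b :=
      fun b hb => ⟨fun h => hvS (h ▸ hb), fun h => (hNS b h) hb⟩
    have hu' : ∀ b ∈ S, u ≠ b ∧ ¬ G.Adj u b := by
      intro b hb
      refine ⟨fun h => huS (h ▸ hb), fun h => ?_⟩
      exact hvS (leaf u huv huB b h ▸ hb)
    intro a ha b hb
    rcases Sym2.mem_iff.1 ha with h | h
    · exact h ▸ hv' b hb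
    · exact h ▸ hu' b hb
  have hMmatch : IsInducedMatching G M := by
    constructor
    · intro e he
      rcases Finset.mem_insert.1 he with rfl | he
      · exact G.mem_edgeSet.2 huv
      · obtain ⟨e0, he0, rfl⟩ := Finset.mem_image.1 he
        have he0' : e0 ∈ H.edgeSet := hM₀.1 he0
        revert he0'
        refine Sym2.ind (fun a b => ?_) e0
        intro h
        rw [hfdef, Sym2.map_pair_eq, G.mem_edgeSet]
        exact (hHadj a b).1 (H.mem_edgeSet.1 h)
    · intro e he f' hf' hef a ha b hb
      rcases Finset.mem_insert.1 he with rfl | he <;>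
        rcases Finset.mem_insert.1 hf' with rfl | hf'
      · exact absurd rfl hef
      · obtain ⟨f0, hf0, rfl⟩ := Finset.mem_image.1 hf'
        exact hcross a ha b (hmemS b f0 hb)
      · obtain ⟨e0, he0, rfl⟩ := Finset.mem_image.1 he
        have := hcross b hb a (hmemS a e0 ha)
        exact ⟨fun h => this.1 h.symm, fun h => this.2 h.symm⟩
      · obtain ⟨e0, he0, rfl⟩ := Finset.mem_image.1 he
        obtain ⟨f0, hf0, rfl⟩ := Finset.mem_image.1 hf'
        have hne : e0 ≠ f0 := fun h => hef (h ▸ rfl)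
        obtain ⟨a', ha', rfl⟩ := Sym2.mem_map.1 ha
        obtain ⟨b', hb', rfl⟩ := Sym2.mem_map.1 hb
        obtain ⟨h1, h2⟩ := hM₀.2 e0 he0 f0 hf0 hne a' ha' b' hb'
        exact ⟨fun h => h1 (Subtype.val_injective h), fun h => h2 ((hHadj a' b').2 h)⟩
  have hMcard : M.card = M₀.card + 1 := by
    rw [hMdef, Finset.card_insert_of_notMem hvu_not,
      Finset.card_image_of_injective _ hfinj]
  have hstep : strongMatchingNumber H + 1 ≤ strongMatchingNumber G := by
    have := card_le_strong G M hMmatch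
    omega
  have hmin' := hmin ↥S H hcardlt hdegH
  rw [hC5, hcardS] at hmin'
  omega
end

section
/- If G is a minimum counterexample, then there is no cut vertex v of G together with a block B of G of order 10 such that v belongs to B and v is the only cut vertex of G contained in B. -/
open SimpleGraph

universe u

/-- `v` is a cut vertex of `G`: removing `v` increases the number of
connected components. -/
def IsCutVertex {V : Type u} [Fintype V] (G : SimpleGraph V) (v : V) : Prop :=
  Nat.card G.ConnectedComponent <
    Nat.card (G.induce ({v}ᶜ : Set V)).ConnectedComponent

/-- The induced subgraph on `B` is 2-connected: it has at least 3 vertices,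
is connected, and removing any single vertex keeps it connected. -/
def TwoConnectedOn {V : Type u} (G : SimpleGraph V) (B : Set V) : Prop :=
  3 ≤ B.ncard ∧ (G.induce B).Connected ∧
    ∀ x ∈ B, (G.induce (B \ {x})).Connected

/-- `B` is a block of `G`: a maximal 2-connected (induced) subgraph. -/
def IsBlock {V : Type u} (G : SimpleGraph V) (B : Set V) : Prop :=
  TwoConnectedOn G B ∧ ∀ B' : Set V, B ⊆ B' → TwoConnectedOn G B' → B' = B

section Helpers2
variable {V : Type u} {G : SimpleGraph V}


lemma reachable_induce_of_walk {s : Set V} :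
    ∀ {a c : V} (p : G.Walk a c), (∀ x ∈ p.support, x ∈ s) →
    ∀ (ha : a ∈ s) (hc : c ∈ s), (G.induce s).Reachable ⟨a, ha⟩ ⟨c, hc⟩ := by
  intro a c p
  induction p with
  | nil => intro _ ha hc; exact Reachable.refl _
  | @cons a b c h q ih =>
    intro hs ha hc
    have hb : b ∈ s := hs b (by simp)
    have hadj : (G.induce s).Adj ⟨a, ha⟩ ⟨b, hb⟩ := h
    exact hadj.reachable.trans (ih (fun x hx => hs x (by simp [hx])) hb hc)

lemma exists_walk_of_reachable_induce {s : Set V} {x y : ↥s}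
    (h : (G.induce s).Reachable x y) :
    ∃ p : G.Walk x.1 y.1, ∀ z ∈ p.support, z ∈ s := by
  obtain ⟨p⟩ := h
  refine ⟨p.map (SimpleGraph.Embedding.induce s).toHom, ?_⟩
  intro z hz
  have hz' : z ∈ (p.map (SimpleGraph.Embedding.induce s).toHom).support := hz
  rw [Walk.support_map] at hz'
  obtain ⟨a, _, rfl⟩ := List.mem_map.mp hz'
  exact a.2

lemma reachable_induce_mono {s t : Set V} (hst : s ⊆ t) {a b : V} {ha : a ∈ s} {hb : b ∈ s}
    (h : (G.induce s).Reachable ⟨a, ha⟩ ⟨b, hb⟩) (ha' : a ∈ t) (hb' : b ∈ t) :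
    (G.induce t).Reachable ⟨a, ha'⟩ ⟨b, hb'⟩ := by
  obtain ⟨p, hp⟩ := exists_walk_of_reachable_induce h
  exact reachable_induce_of_walk p (fun z hz => hst (hp z hz)) _ _

lemma induce_connected_anchor {s : Set V} {a : V} (ha : a ∈ s)
    (h : ∀ y (hy : y ∈ s), (G.induce s).Reachable ⟨y, hy⟩ ⟨a, ha⟩) :
    (G.induce s).Connected := by
  have : Nonempty ↥s := ⟨⟨a, ha⟩⟩
  exact ⟨fun x y => (h x.1 x.2).trans (h y.1 y.2).symm⟩

lemma walk_adj_helper {W : Type*} {Γ : SimpleGraph W} :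
    ∀ {x y : W} (_ : Γ.Walk x y), x ≠ y → ∃ z, Γ.Adj x z := by
  intro x y p
  cases p with
  | nil => intro h; exact absurd rfl h
  | cons h q => intro _; exact ⟨_, h⟩

lemma exists_adj_of_connected {s : Set V} (hc : (G.induce s).Connected) {y z : V}
    (hy : y ∈ s) (hz : z ∈ s) (hne : y ≠ z) : ∃ u ∈ s, G.Adj y u := by
  obtain ⟨p⟩ := hc.preconnected ⟨y, hy⟩ ⟨z, hz⟩
  obtain ⟨u', hadj⟩ := walk_adj_helper p (fun h => hne (congrArg Subtype.val h))
  exact ⟨u'.1, u'.2, hadj⟩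

lemma exists_prefix_to_set (S : Set V) :
    ∀ {a c : V} (p : G.Walk a c), c ∈ S →
    ∃ b ∈ S, ∃ q : G.Walk a b, (∀ x ∈ q.support, x ≠ b → x ∉ S) ∧
      (∀ x ∈ q.support, x ∈ p.support) := by
  intro a c p
  induction p with
  | nil =>
    intro hc
    exact ⟨_, hc, Walk.nil, by simp, by simp⟩
  | @cons a b c h q ih =>
    intro hc
    by_cases ha : a ∈ S
    · exact ⟨a, ha, Walk.nil, by simp, by simp⟩
    · obtain ⟨b0, hb0, r, hr1, hr2⟩ := ih hc
      refine ⟨b0, hb0, Walk.cons h r, ?_, ?_⟩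
      · intro x hx hxb
        rw [Walk.support_cons] at hx
        rcases List.mem_cons.mp hx with rfl | hx
        · exact ha
        · exact hr1 x hx hxb
      · intro x hx
        rw [Walk.support_cons] at hx
        rcases List.mem_cons.mp hx with rfl | hx
        · simp
        · simp [hr2 x hx]



lemma path_split_reach (G : SimpleGraph V) (x : V) :
    ∀ {u t : V} (p : G.Walk u t), p.support.Nodup → ∀ y ∈ p.support, y ≠ x →
    (∃ (h1 : y ∈ {z | z ∈ p.support ∧ z ≠ x}) (h2 : u ∈ {z | z ∈ p.support ∧ z ≠ x}),
      (G.induce {z | z ∈ p.support ∧ z ≠ x}).Reachable ⟨y, h1⟩ ⟨u, h2⟩) ∨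
    (∃ (h1 : y ∈ {z | z ∈ p.support ∧ z ≠ x}) (h2 : t ∈ {z | z ∈ p.support ∧ z ≠ x}),
      (G.induce {z | z ∈ p.support ∧ z ≠ x}).Reachable ⟨y, h1⟩ ⟨t, h2⟩) := by
  intro u t p
  induction p with
  | nil =>
    intro _ y hy hyx
    rw [Walk.support_nil] at hy
    rcases List.mem_singleton.mp hy with rfl
    exact Or.inl ⟨⟨by simp, hyx⟩, ⟨by simp, hyx⟩, Reachable.refl _⟩
  | @cons a b c h q ih =>
    intro hnd y hy hyx
    rw [Walk.support_cons] at hnd hy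
    have hanq : a ∉ q.support := (List.nodup_cons.mp hnd).1
    have hnd' : q.support.Nodup := (List.nodup_cons.mp hnd).2
    have hsub : {z | z ∈ q.support ∧ z ≠ x} ⊆ {z | z ∈ (Walk.cons h q).support ∧ z ≠ x} := by
      intro z hz
      exact ⟨by rw [Walk.support_cons]; exact List.mem_cons_of_mem _ hz.1, hz.2⟩
    rcases List.mem_cons.mp hy with rfl | hy'
    · -- y = a
      have h1 : y ∈ {z | z ∈ (Walk.cons h q).support ∧ z ≠ x} :=
        ⟨(Walk.cons h q).start_mem_support, hyx⟩
      exact Or.inl ⟨h1, h1, Reachable.refl _⟩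
    · rcases ih hnd' y hy' hyx with ⟨h1, h2, hr⟩ | ⟨h1, h2, hr⟩
      · -- reach y b
        by_cases hax : a = x
        · -- a = x : go to the end instead
          subst hax
          have hxq : ∀ z ∈ q.support, z ≠ a := fun z hz heq => hanq (heq ▸ hz)
          have hrbc : (G.induce {z | z ∈ q.support ∧ z ≠ a}).Reachable
              ⟨b, ⟨q.start_mem_support, hxq _ q.start_mem_support⟩⟩
              ⟨c, ⟨q.end_mem_support, hxq _ q.end_mem_support⟩⟩ :=
            reachable_induce_of_walk q (fun z hz => show z ∈ q.support ∧ z ≠ a from ⟨hz, hxq z hz⟩) _ _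
          have := hr.trans hrbc
          exact Or.inr ⟨hsub h1, hsub ⟨q.end_mem_support, hxq _ q.end_mem_support⟩,
            reachable_induce_mono hsub this _ _⟩
        · -- a ≠ x : extend by the edge b ~ a
          have ha' : a ∈ {z | z ∈ (Walk.cons h q).support ∧ z ≠ x} :=
            ⟨(Walk.cons h q).start_mem_support, hax⟩
          have hb' : b ∈ {z | z ∈ (Walk.cons h q).support ∧ z ≠ x} := hsub h2
          have hadj : (G.induce {z | z ∈ (Walk.cons h q).support ∧ z ≠ x}).Adj
              ⟨b, hb'⟩ ⟨a, ha'⟩ := h.symm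
          exact Or.inl ⟨hsub h1, ha',
            (reachable_induce_mono hsub hr _ _).trans hadj.reachable⟩
      · exact Or.inr ⟨hsub h1, hsub h2, reachable_induce_mono hsub hr _ _⟩


lemma card_cc_eq_one (hGc : G.Connected) : Nat.card G.ConnectedComponent = 1 := by
  have h1 : Subsingleton G.ConnectedComponent :=
    hGc.preconnected.subsingleton_connectedComponent
  have h2 : Nonempty G.ConnectedComponent := by
    obtain ⟨v⟩ := hGc.nonempty
    exact ⟨G.connectedComponentMk v⟩
  exact Nat.card_eq_one_iff_unique.mpr ⟨h1, h2⟩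

lemma connected_of_not_cut [Fintype V] (hGc : G.Connected) {b : V}
    (hncut : ¬ IsCutVertex G b) (hne : Nonempty ↥({b}ᶜ : Set V)) :
    (G.induce ({b}ᶜ : Set V)).Connected := by
  have h1 : Nat.card (G.induce ({b}ᶜ : Set V)).ConnectedComponent ≤ 1 := by
    by_contra hgt
    push_neg at hgt
    exact hncut (by rw [IsCutVertex, card_cc_eq_one hGc]; exact hgt)
  obtain ⟨x⟩ := hne
  have hne' : Nonempty (G.induce ({b}ᶜ : Set V)).ConnectedComponent :=
    ⟨(G.induce ({b}ᶜ : Set V)).connectedComponentMk x⟩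
  have hpos : 0 < Nat.card (G.induce ({b}ᶜ : Set V)).ConnectedComponent := Nat.card_pos
  have hsub : Subsingleton (G.induce ({b}ᶜ : Set V)).ConnectedComponent :=
    (Nat.card_eq_one_iff_unique.mp (le_antisymm h1 hpos)).1
  have : Nonempty ↥({b}ᶜ : Set V) := ⟨x⟩
  refine ⟨fun x y => ?_⟩
  exact (SimpleGraph.ConnectedComponent.eq).mp (Subsingleton.elim _ _)

lemma no_cross [Fintype V] (hGc : G.Connected) {B : Set V} {v : V}
    (hB : IsBlock G B) (hv : v ∈ B)
    (honly : ∀ w ∈ B, IsCutVertex G w → w = v)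
    {b w : V} (hb : b ∈ B) (hbv : b ≠ v) (hw : w ∉ B) (hadj : G.Adj b w) : False := by
  classical
  have hncut : ¬ IsCutVertex G b := fun hc => hbv (honly b hb hc)
  have hwb : w ≠ b := hadj.ne'
  have hwc : w ∈ ({b}ᶜ : Set V) := hwb
  have hvc : v ∈ ({b}ᶜ : Set V) := fun hmem => hbv (Set.eq_of_mem_singleton hmem).symm
  have hG'c := connected_of_not_cut hGc hncut ⟨⟨w, hwc⟩⟩
  obtain ⟨p, hp⟩ := exists_walk_of_reachable_induce
    (hG'c.preconnected ⟨w, hwc⟩ ⟨v, hvc⟩)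
  obtain ⟨b0, hb0B, q0, hq0a, hq0b⟩ := exists_prefix_to_set B p hv
  set q : G.Walk w b0 := q0.bypass with hqdef
  have hqpath : q.IsPath := q0.bypass_isPath
  have hnd : q.support.Nodup := hqpath.support_nodup
  have hsubq : ∀ x ∈ q.support, x ∈ q0.support := fun x hx => q0.support_bypass_subset hx
  have hqB : ∀ x ∈ q.support, x ≠ b0 → x ∉ B := fun x hx => hq0a x (hsubq x hx)
  have hqb : ∀ x ∈ q.support, x ≠ b := by
    intro x hx
    have : x ∈ ({b}ᶜ : Set V) := hp x (hq0b x (hsubq x hx))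
    exact this
  have hwq : w ∈ q.support := q.start_mem_support
  have hb0q : b0 ∈ q.support := q.end_mem_support
  have hbq : b ∉ q.support := fun hmem => (hqb b hmem) rfl
  have hbb0 : b ≠ b0 := fun heq => hbq (heq ▸ hb0q)
  have hwb0 : w ≠ b0 := fun heq => hw (heq ▸ hb0B)
  set B' : Set V := B ∪ {z | z ∈ q.support} with hB'def
  have hBB' : B ⊆ B' := Set.subset_union_left
  have hBfin : B.Finite := Set.toFinite _
  -- two-connectivity of B'
  have h2conn : TwoConnectedOn G B' := by
    obtain ⟨hB3, hBconn, hBdel⟩ := hB.1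
    refine ⟨le_trans hB3 (Set.ncard_le_ncard hBB' (Set.toFinite _)), ?_, ?_⟩
    · -- connected
      refine induce_connected_anchor (a := b0) (Or.inl hb0B) ?_
      intro y hy
      rcases hy with hyB | hyq
      · exact reachable_induce_mono hBB' (hBconn.preconnected ⟨y, hyB⟩ ⟨b0, hb0B⟩)
          (Or.inl hyB) (Or.inl hb0B)
      · exact reachable_induce_of_walk (q.dropUntil y hyq)
          (fun z hz => Or.inr (q.support_dropUntil_subset hyq hz)) _ _
    · -- deletion of any vertex keeps it connected
      intro x hxB'
      by_cases hxB : x ∈ B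
      · by_cases hxb0 : x = b0
        · -- x = b0
          subst hxb0
          have hbmem : b ∈ B' \ {x} := ⟨Or.inl hb, hbb0⟩
          refine induce_connected_anchor (a := b) hbmem ?_
          intro y hy
          obtain ⟨hyB', hyx⟩ := hy
          have hyx' : y ≠ x := hyx
          rcases hyB' with hyB | hyq
          · -- y ∈ B : use 2-connectivity of B
            have hr := (hBdel x hxB).preconnected ⟨y, ⟨hyB, hyx'⟩⟩ ⟨b, ⟨hb, hbb0⟩⟩
            exact reachable_induce_mono (by intro z hz; exact ⟨Or.inl hz.1, hz.2⟩) hr _ _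
          · -- y ∈ q.support, y ≠ b0
            rcases path_split_reach G x q hnd y hyq hyx' with ⟨h1, h2, hr⟩ | ⟨_, h2, _⟩
            · -- reach y w within q.support minus x
              have hsub2 : {z | z ∈ q.support ∧ z ≠ x} ⊆ B' \ {x} := by
                intro z hz; exact ⟨Or.inr hz.1, hz.2⟩
              have hwmem : w ∈ B' \ {x} := hsub2 h2
              have hadj2 : (G.induce (B' \ {x})).Adj ⟨w, hwmem⟩ ⟨b, hbmem⟩ := hadj.symm
              exact (reachable_induce_mono hsub2 hr _ _).trans hadj2.reachable
            · exact absurd rfl h2.2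
        · -- x ∈ B, x ≠ b0
          have hxq : x ∉ q.support := fun hmem => (hqB x hmem hxb0) hxB
          have hb0mem : b0 ∈ B' \ {x} := ⟨Or.inl hb0B, fun heq => hxb0 ((Set.eq_of_mem_singleton heq).symm)⟩
          refine induce_connected_anchor (a := b0) hb0mem ?_
          intro y hy
          obtain ⟨hyB', hyx⟩ := hy
          rcases hyB' with hyB | hyq
          · have hr := (hBdel x hxB).preconnected ⟨y, ⟨hyB, hyx⟩⟩
              ⟨b0, ⟨hb0B, fun heq => hxb0 ((Set.eq_of_mem_singleton heq).symm)⟩⟩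
            exact reachable_induce_mono (by intro z hz; exact ⟨Or.inl hz.1, hz.2⟩) hr _ _
          · exact reachable_induce_of_walk (s := B' \ {x}) (q.dropUntil y hyq)
              (fun z hz => ⟨Or.inr (q.support_dropUntil_subset hyq hz),
                fun heq => hxq ((Set.eq_of_mem_singleton heq) ▸ q.support_dropUntil_subset hyq hz)⟩) _ _
      · -- x ∉ B, so x ∈ q.support
        have hxq : x ∈ q.support := by
          rcases hxB' with h | h
          · exact absurd h hxB
          · exact h
        have hxb : x ≠ b := fun heq => hbq (heq ▸ hxq)
        have hb0mem : b0 ∈ B' \ {x} := ⟨Or.inl hb0B, fun heq => hxB ((Set.eq_of_mem_singleton heq) ▸ hb0B)⟩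
        have hbmem : b ∈ B' \ {x} := ⟨Or.inl hb, fun heq => hxb (Set.eq_of_mem_singleton heq).symm⟩
        have hBsub : ∀ z ∈ B, z ∈ B' \ {x} :=
          fun z hz => ⟨Or.inl hz, fun heq => hxB ((Set.eq_of_mem_singleton heq) ▸ hz)⟩
        have hreach_b_b0 : (G.induce (B' \ {x})).Reachable ⟨b, hbmem⟩ ⟨b0, hb0mem⟩ := by
          have hr := hBconn.preconnected ⟨b, hb⟩ ⟨b0, hb0B⟩
          exact reachable_induce_mono (fun z hz => hBsub z hz) hr _ _
        refine induce_connected_anchor (a := b0) hb0mem ?_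
        intro y hy
        obtain ⟨hyB', hyx⟩ := hy
        rcases hyB' with hyB | hyq
        · have hr := hBconn.preconnected ⟨y, hyB⟩ ⟨b0, hb0B⟩
          exact reachable_induce_mono (fun z hz => hBsub z hz) hr _ _
        · have hsub2 : {z | z ∈ q.support ∧ z ≠ x} ⊆ B' \ {x} := by
            intro z hz; exact ⟨Or.inr hz.1, hz.2⟩
          rcases path_split_reach G x q hnd y hyq hyx with ⟨h1, h2, hr⟩ | ⟨h1, h2, hr⟩
          · -- reach y w, then w ~ b, then b to b0
            have hwmem : w ∈ B' \ {x} := hsub2 h2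
            have hadj2 : (G.induce (B' \ {x})).Adj ⟨w, hwmem⟩ ⟨b, hbmem⟩ := hadj.symm
            exact ((reachable_induce_mono hsub2 hr _ _).trans hadj2.reachable).trans hreach_b_b0
          · exact reachable_induce_mono hsub2 hr _ _
  have heq := hB.2 B' hBB' h2conn
  exact hw (heq ▸ (Or.inr hwq : w ∈ B'))

lemma walk_avoiding [Fintype V] (hGc : G.Connected) {B : Set V} {v : V} (hv : v ∈ B)
    (hcross : ∀ b ∈ B, b ≠ v → ∀ w, w ∉ B → ¬ G.Adj b w)
    {x1 : V} (hx1 : x1 ∉ B) :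
    ∃ q : G.Walk x1 v, ∀ z ∈ q.support, z = v ∨ z ∉ B := by
  obtain ⟨p⟩ := hGc.preconnected x1 v
  obtain ⟨b0, hb0B, q, hqa, _⟩ := exists_prefix_to_set B p hv
  have hx1b0 : x1 ≠ b0 := fun h => hx1 (h ▸ hb0B)
  have hb0v : b0 = v := by
    by_contra hne
    have hnn : ¬ q.reverse.Nil := Walk.not_nil_of_ne (Ne.symm hx1b0)
    have had : G.Adj b0 (q.reverse.getVert 1) := Walk.adj_snd hnn
    have hmem : q.reverse.getVert 1 ∈ q.reverse.support :=
      Walk.mem_support_iff_exists_getVert.mpr ⟨1, rfl, by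
        rw [Walk.not_nil_iff_lt_length] at hnn; omega⟩
    rw [Walk.support_reverse, List.mem_reverse] at hmem
    have hzb0 : q.reverse.getVert 1 ≠ b0 := had.ne'
    exact hcross b0 hb0B hne _ (hqa _ hmem hzb0) had
  refine ⟨q.copy rfl hb0v, fun z hz => ?_⟩
  rw [Walk.support_copy] at hz
  by_cases hzv : z = v
  · exact Or.inl hzv
  · exact Or.inr (hqa z hz (by rw [hb0v]; exact hzv))

lemma two_nbrs [Fintype V] {B : Set V} (hB2 : TwoConnectedOn G B) (hB10 : B.ncard = 10)
    {u : V} (hu : u ∈ B) :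
    ∃ z1 z2, z1 ∈ B ∧ z2 ∈ B ∧ z1 ≠ z2 ∧ G.Adj u z1 ∧ G.Adj u z2 := by
  obtain ⟨hB3, hBconn, hBdel⟩ := hB2
  have hfin : B.Finite := Set.toFinite _
  have hd1 : (B \ {u}).ncard = 9 := by
    rw [Set.ncard_diff_singleton_of_mem hu, hB10]
  obtain ⟨z, hz⟩ : (B \ {u}).Nonempty := by
    apply Set.nonempty_of_ncard_ne_zero; rw [hd1]; omega
  obtain ⟨z1, hz1B, hadj1⟩ := exists_adj_of_connected hBconn hu hz.1 (fun h => hz.2 h.symm)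
  have hz1B' : z1 ∈ B := hz1B
  have huz1 : u ≠ z1 := hadj1.ne
  have hd2 : ((B \ {z1}) \ {u}).ncard = 8 := by
    rw [Set.ncard_diff_singleton_of_mem (s := B \ {z1}) ((Set.mem_diff _).mpr ⟨hu, huz1⟩),
      Set.ncard_diff_singleton_of_mem hz1B', hB10]
  obtain ⟨w2, hw2⟩ : ((B \ {z1}) \ {u}).Nonempty := by
    apply Set.nonempty_of_ncard_ne_zero; rw [hd2]; omega
  obtain ⟨z2, hz2B, hadj2⟩ := exists_adj_of_connected (hBdel z1 hz1B') ⟨hu, huz1⟩ hw2.1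
    (fun h => hw2.2 h.symm)
  exact ⟨z1, z2, hz1B', hz2B.1, fun h => hz2B.2 h.symm, hadj1, hadj2⟩

lemma deg_induce_le [Fintype V] {s : Set V} (a : ↥s) :
    deg (G.induce s) a ≤ deg G a.1 := by
  exact Set.ncard_le_ncard_of_injOn Subtype.val (fun b hb => hb)
    Subtype.val_injective.injOn (Set.toFinite _)

lemma deg_iso_s15 {α β : Type*} {Ga : SimpleGraph α} {Gb : SimpleGraph β} (e : Ga ≃g Gb) (x : α) :
    deg Ga x = deg Gb (e x) := by
  rw [deg, deg, ← Nat.card_coe_set_eq, ← Nat.card_coe_set_eq]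
  exact Nat.card_congr (e.mapNeighborSet x)

instance inst_s15 : DecidableRel C5Sq.Adj := fun a b =>
  decidable_of_iff' _ (SimpleGraph.fromRel_adj _ a b)

lemma deg_C5Sq : ∀ x : ZMod 5 × Fin 2, deg C5Sq x = 4 := by
  have h1 : ∀ x, deg C5Sq x = (Finset.univ.filter (C5Sq.Adj x)).card := by
    intro x
    have h2 : C5Sq.neighborSet x = ↑(Finset.univ.filter (C5Sq.Adj x)) := by
      ext z; simp [SimpleGraph.mem_neighborSet]
    rw [deg, h2, Set.ncard_coe_finset]
  intro x
  rw [h1]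
  revert x; decide
lemma empty_matching (G : SimpleGraph V) : IsInducedMatching G (∅ : Finset (Sym2 V)) := by
  constructor
  · simp
  · intro e he
    exact absurd he (Finset.notMem_empty e)

lemma smn_bdd [Fintype V] (G : SimpleGraph V) :
    BddAbove {k | ∃ M : Finset (Sym2 V), IsInducedMatching G M ∧ M.card = k} := by
  classical
  exact ⟨Fintype.card (Sym2 V), by rintro k ⟨M, _, rfl⟩; exact Finset.card_le_univ M⟩

lemma smn_mem [Fintype V] (G : SimpleGraph V) :
    ∃ M : Finset (Sym2 V), IsInducedMatching G M ∧ M.card = strongMatchingNumber G := by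
  have hne : Set.Nonempty {k | ∃ M : Finset (Sym2 V), IsInducedMatching G M ∧ M.card = k} :=
    ⟨0, ∅, empty_matching G, rfl⟩
  exact Nat.sSup_mem hne (smn_bdd G)

lemma smn_ge [Fintype V] (G : SimpleGraph V) {M : Finset (Sym2 V)}
    (hM : IsInducedMatching G M) : M.card ≤ strongMatchingNumber G :=
  le_csSup (smn_bdd G) ⟨M, hM, rfl⟩

lemma exists_far_edge [Fintype V] {B : Set V} {v : V}
    (hB2 : TwoConnectedOn G B) (hB10 : B.ncard = 10) (hv : v ∈ B)
    (hdeg : ∀ u, deg G u ≤ 4) (hout : ∃ u, u ∉ B ∧ G.Adj v u)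
    (hcon : ∀ x y, x ∈ B → x ≠ v → ¬ G.Adj v x → y ∈ B → y ≠ v → ¬ G.Adj v y →
      ¬ G.Adj x y) : False := by
  classical
  set Nf : V → Finset V := fun u => Finset.univ.filter (G.Adj u) with hNfdef
  have hNfdeg : ∀ u, (Nf u).card = deg G u := by
    intro u
    have : G.neighborSet u = ↑(Nf u) := by ext z; simp [hNfdef, SimpleGraph.mem_neighborSet]
    rw [deg, this, Set.ncard_coe_finset]
  have hNf4 : ∀ u, (Nf u).card ≤ 4 := fun u => (hNfdeg u).le.trans (hdeg u)
  set Bf : Finset V := Finset.univ.filter (· ∈ B) with hBfdef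
  have hBf10 : Bf.card = 10 := by
    have : B = ↑Bf := by ext z; simp [hBfdef]
    rw [this, Set.ncard_coe_finset] at hB10
    exact hB10
  set Tf : Finset V := Bf.filter (G.Adj v) with hTfdef
  set Sf : Finset V := Bf.filter (fun x => x ≠ v ∧ ¬ G.Adj v x) with hSfdef
  obtain ⟨u0, hu0B, hu0adj⟩ := hout
  have hT3 : Tf.card ≤ 3 := by
    have hsub : insert u0 Tf ⊆ Nf v := by
      intro z hz
      rcases Finset.mem_insert.mp hz with rfl | hz
      · simp [hNfdef, hu0adj]
      · simp only [hTfdef, Finset.mem_filter] at hz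
        simp [hNfdef, hz.2]
    have hnm : u0 ∉ Tf := by
      simp only [hTfdef, hBfdef, Finset.mem_filter, Finset.mem_univ, true_and]
      intro h; exact absurd h.1 hu0B
    have := Finset.card_le_card hsub
    rw [Finset.card_insert_of_notMem hnm] at this
    have := this.trans (hNf4 v)
    omega
  have hS6 : 6 ≤ Sf.card := by
    have hsub : Bf ⊆ insert v (Tf ∪ Sf) := by
      intro x hx
      by_cases hxv : x = v
      · simp [hxv]
      · by_cases hxa : G.Adj v x
        · exact Finset.mem_insert_of_mem (Finset.mem_union_left _ (by simp [hTfdef, hx, hxa]))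
        · exact Finset.mem_insert_of_mem (Finset.mem_union_right _ (by simp [hSfdef, hx, hxv, hxa]))
    have h1 := Finset.card_le_card hsub
    have h2 := Finset.card_insert_le v (Tf ∪ Sf)
    have h3 := Finset.card_union_le Tf Sf
    omega
  have key1 : ∀ s ∈ Sf, 2 ≤ (Tf.filter (fun t => G.Adj s t)).card := by
    intro s hs
    simp only [hSfdef, hBfdef, Finset.mem_filter, Finset.mem_univ, true_and] at hs
    obtain ⟨hsB, hsv, hsa⟩ := hs
    obtain ⟨z1, z2, hz1B, hz2B, hz12, had1, had2⟩ := two_nbrs hB2 hB10 hsB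
    have hzT : ∀ z, z ∈ B → G.Adj s z → z ∈ Tf.filter (fun t => G.Adj s t) := by
      intro z hzB hadz
      have hzv : z ≠ v := by
        rintro rfl; exact hsa hadz.symm
      have hzadj : G.Adj v z := by
        by_contra hna
        exact hcon s z hsB hsv hsa hzB hzv hna hadz
      simp [hTfdef, hBfdef, hzB, hzadj, hadz]
    have hsub : {z1, z2} ⊆ Tf.filter (fun t => G.Adj s t) := by
      intro z hz
      rcases Finset.mem_insert.mp hz with rfl | hz
      · exact hzT z hz1B had1
      · rw [Finset.mem_singleton] at hz
        subst hz
        exact hzT z hz2B had2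
    have := Finset.card_le_card hsub
    rwa [Finset.card_pair hz12] at this
  have key2 : ∀ t ∈ Tf, (Sf.filter (fun s => G.Adj t s)).card ≤ 3 := by
    intro t ht
    simp only [hTfdef, hBfdef, Finset.mem_filter, Finset.mem_univ, true_and] at ht
    have hsub : Sf.filter (fun s => G.Adj t s) ⊆ (Nf t).erase v := by
      intro z hz
      simp only [hSfdef, hBfdef, Finset.mem_filter, Finset.mem_univ, true_and] at hz
      refine Finset.mem_erase.mpr ⟨hz.1.2.1, by simp [hNfdef, hz.2]⟩
    have h1 := Finset.card_le_card hsub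
    have h2 : ((Nf t).erase v).card ≤ 3 := by
      have hvN : v ∈ Nf t := by simp [hNfdef, ht.2.symm]
      have := Finset.card_erase_of_mem hvN
      have := hNf4 t
      omega
    omega
  have hsum : ∑ s ∈ Sf, (Tf.filter (fun t => G.Adj s t)).card
      = ∑ t ∈ Tf, (Sf.filter (fun s => G.Adj t s)).card := by
    simp_rw [Finset.card_filter]
    rw [Finset.sum_comm]
    refine Finset.sum_congr rfl fun t _ => Finset.sum_congr rfl fun s _ => ?_
    exact if_congr ⟨fun a => a.symm, fun a => a.symm⟩ rfl rfl
  have hlow : 2 * Sf.card ≤ ∑ s ∈ Sf, (Tf.filter (fun t => G.Adj s t)).card := by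
    calc 2 * Sf.card = ∑ _s ∈ Sf, 2 := by rw [Finset.sum_const, smul_eq_mul, mul_comm]
    _ ≤ _ := Finset.sum_le_sum key1
  have hhigh : ∑ t ∈ Tf, (Sf.filter (fun s => G.Adj t s)).card ≤ 3 * Tf.card := by
    calc ∑ t ∈ Tf, (Sf.filter (fun s => G.Adj t s)).card ≤ ∑ _t ∈ Tf, 3 :=
      Finset.sum_le_sum key2
    _ = 3 * Tf.card := by rw [Finset.sum_const, smul_eq_mul, mul_comm]
  omega

end Helpers2

/-- In a minimum counterexample, there is no cut vertex `v`
together with a block `B` of order 10 such that `v ∈ B` and `v` is the only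
cut vertex of `G` contained in `B`. -/
theorem stmt15 {V : Type u} [Fintype V] (G : SimpleGraph V)
    (hG : MinCounterexample G) :
    ¬ ∃ (v : V) (B : Set V), IsCutVertex G v ∧ IsBlock G B ∧
      B.ncard = 10 ∧ v ∈ B ∧ ∀ w ∈ B, IsCutVertex G w → w = v := by
  classical
  rintro ⟨v, B, hcut, hB, hB10, hv, honly⟩
  obtain ⟨hGc, hdeg, hnbr, _hnotC5, hlt, hmin⟩ := hG
  have hcross : ∀ b ∈ B, b ≠ v → ∀ w, w ∉ B → ¬ G.Adj b w :=
    fun b hb hbv w hw hadj => no_cross hGc hB hv honly hb hbv hw hadj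
  -- B is not everything
  have hBne : ∃ u, u ∉ B := by
    by_contra hall
    push_neg at hall
    have hBuniv : B = Set.univ := Set.eq_univ_of_forall hall
    have hconn' : (G.induce ({v}ᶜ : Set V)).Connected := by
      have hdel := hB.1.2.2 v hv
      rw [hBuniv] at hdel
      rwa [show (Set.univ \ {v} : Set V) = ({v}ᶜ : Set V) from
        (Set.compl_eq_univ_diff _).symm] at hdel
    have h1 : Nat.card (G.induce ({v}ᶜ : Set V)).ConnectedComponent = 1 :=
      card_cc_eq_one hconn'
    have h2 : Nat.card G.ConnectedComponent = 1 := card_cc_eq_one hGc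
    rw [IsCutVertex, h1, h2] at hcut
    omega
  -- v has a neighbour outside B
  have hout : ∃ u, u ∉ B ∧ G.Adj v u := by
    obtain ⟨u1, hu1⟩ := hBne
    obtain ⟨q, hq⟩ := walk_avoiding hGc hv hcross hu1
    have hu1v : u1 ≠ v := fun h => hu1 (h ▸ hv)
    have hnn : ¬ q.reverse.Nil := Walk.not_nil_of_ne (Ne.symm hu1v)
    have had : G.Adj v (q.reverse.getVert 1) := Walk.adj_snd hnn
    have hmem : q.reverse.getVert 1 ∈ q.reverse.support :=
      Walk.mem_support_iff_exists_getVert.mpr ⟨1, rfl, by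
        rw [Walk.not_nil_iff_lt_length] at hnn; omega⟩
    rw [Walk.support_reverse, List.mem_reverse] at hmem
    rcases hq _ hmem with hzv | hzB
    · exact absurd hzv had.ne'
    · exact ⟨_, hzB, had⟩
  -- the smaller graph H on W' = complement of (B \ {v})
  set W' : Set V := (B \ {v})ᶜ with hW'def
  have hvW : v ∈ W' := fun h => h.2 rfl
  have hmemW : ∀ z, z ∉ B → z ∈ W' := fun z hz h => hz h.1
  set H : SimpleGraph ↥W' := G.induce W' with hHdef
  have hHdeg : ∀ w : ↥W', deg H w ≤ 4 := fun w => (deg_induce_le w).trans (hdeg w.1)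
  -- H is connected
  have hHconn : H.Connected := by
    refine induce_connected_anchor (a := v) hvW ?_
    intro y hy
    by_cases hyv : y = v
    · subst hyv; exact Reachable.refl _
    · have hyB : y ∉ B := fun hyB => hy ⟨hyB, hyv⟩
      obtain ⟨q, hq⟩ := walk_avoiding hGc hv hcross hyB
      exact reachable_induce_of_walk q (fun z hz => by
        rcases hq z hz with rfl | h
        · exact hvW
        · exact hmemW z h) hy hvW
  -- a neighbour of v inside B
  obtain ⟨z1, _, hz1B, _, _, had1, _⟩ := two_nbrs hB.1 hB10 hv
  have hz1v : z1 ≠ v := had1.ne'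
  have hz1mem : z1 ∈ B \ {v} := ⟨hz1B, hz1v⟩
  -- degree of v in H is at most 3
  have hdH3 : deg H ⟨v, hvW⟩ ≤ 3 := by
    have h1 : deg H ⟨v, hvW⟩ ≤ (G.neighborSet v \ {z1}).ncard :=
      Set.ncard_le_ncard_of_injOn Subtype.val
        (fun a ha => (Set.mem_diff _).mpr ⟨ha,
          fun heq => a.2 (show a.1 ∈ B \ {v} by rw [show a.1 = z1 from heq]; exact hz1mem)⟩)
        Subtype.val_injective.injOn (Set.toFinite _)
    have h2 : (G.neighborSet v \ {z1}).ncard = (G.neighborSet v).ncard - 1 :=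
      Set.ncard_diff_singleton_of_mem (show z1 ∈ G.neighborSet v from had1)
    have h3 := hdeg v
    have h4 : deg G v = (G.neighborSet v).ncard := rfl
    have h5 : 1 ≤ (G.neighborSet v).ncard := by
      have : z1 ∈ G.neighborSet v := had1
      have hne : (G.neighborSet v).Nonempty := ⟨z1, this⟩
      have := Set.ncard_pos (Set.toFinite _) |>.mpr hne
      omega
    omega
  -- no isolated vertices in H
  have hiso : numIsolated H = 0 := by
    have hempty : {x : ↥W' | ∀ w, ¬ H.Adj x w} = ∅ := by
      apply Set.eq_empty_iff_forall_notMem.mpr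
      rintro x hx
      by_cases hxv : x.1 = v
      · obtain ⟨u0, hu0B, hu0adj⟩ := hout
        exact hx ⟨u0, hmemW u0 hu0B⟩ (show G.Adj x.1 u0 from hxv ▸ hu0adj)
      · have hxB : x.1 ∉ B := fun hxB => x.2 ⟨hxB, hxv⟩
        obtain ⟨y, hy⟩ := hnbr x.1
        have hyW : y ∈ W' := by
          by_contra hyW
          have hyB : y ∈ B \ {v} := not_not.mp hyW
          exact hcross y hyB.1 hyB.2 x.1 hxB hy.symm
        exact hx ⟨y, hyW⟩ hy
    rw [numIsolated, hempty, Set.ncard_empty]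
  -- no C5Sq components in H
  have hC5 : numC5SqComponents H = 0 := by
    have hSub : Subsingleton H.ConnectedComponent :=
      hHconn.preconnected.subsingleton_connectedComponent
    have hempty : {c : H.ConnectedComponent | Nonempty (H.induce c.supp ≃g C5Sq)} = ∅ := by
      apply Set.eq_empty_iff_forall_notMem.mpr
      rintro c ⟨iso⟩
      have hsupp : c.supp = Set.univ := by
        ext z
        simp only [ConnectedComponent.mem_supp_iff, Set.mem_univ, iff_true]
        exact Subsingleton.elim _ _
      rw [hsupp] at iso
      have iso' : H ≃g C5Sq := (induceUnivIso H).symm.trans iso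
      have h4 := deg_C5Sq (iso' ⟨v, hvW⟩)
      have h5 := deg_iso_s15 iso' ⟨v, hvW⟩
      have h6 : deg H ⟨v, hvW⟩ = 4 := by rw [h5, h4]
      omega
    rw [numC5SqComponents, hempty, Set.ncard_empty]
  -- cardinalities
  have hfinW : Fintype.card ↥W' = W'.ncard := by
    rw [← Nat.card_coe_set_eq, Nat.card_eq_fintype_card]
  have hBv9 : (B \ {v}).ncard = 9 := by
    rw [Set.ncard_diff_singleton_of_mem hv, hB10]
  have hWn : W'.ncard + 9 = Fintype.card V := by
    have hcompl := Set.ncard_add_ncard_compl (B \ {v}) (Set.toFinite _) (Set.toFinite _)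
    rw [hBv9, Nat.card_eq_fintype_card] at hcompl
    rw [hW'def]
    omega
  have hlt' : Fintype.card ↥W' < Fintype.card V := by rw [hfinW]; omega
  have hminH := hmin ↥W' H hlt' hHdeg
  rw [hiso, hC5] at hminH
  have hminN : Fintype.card ↥W' ≤ 9 * strongMatchingNumber H := by
    have : (Fintype.card ↥W' : ℤ) ≤ 9 * strongMatchingNumber H := by simpa using hminH
    exact_mod_cast this
  -- build a bigger induced matching in G
  obtain ⟨M, hM, hMcard⟩ := smn_mem H
  obtain ⟨x, y, hxB, hxv, hxa, hyB, hyv, hya, hxy⟩ :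
      ∃ x y, x ∈ B ∧ x ≠ v ∧ ¬ G.Adj v x ∧ y ∈ B ∧ y ≠ v ∧ ¬ G.Adj v y ∧ G.Adj x y := by
    by_contra hno
    push_neg at hno
    exact exists_far_edge hB.1 hB10 hv hdeg hout
      (fun x y h1 h2 h3 h4 h5 h6 => hno x y h1 h2 h3 h4 h5 h6)
  have hfarpt : ∀ a, a ∈ B → a ≠ v → ¬ G.Adj v a → ∀ b0 : ↥W', a ≠ b0.1 ∧ ¬ G.Adj a b0.1 := by
    intro a haB hav hana b0
    constructor
    · intro heq
      exact b0.2 (heq ▸ (⟨haB, hav⟩ : a ∈ B \ {v}))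
    · intro hadj
      by_cases hbv : b0.1 = v
      · rw [hbv] at hadj
        exact hana hadj.symm
      · have hbB : b0.1 ∉ B := fun hmem => b0.2 ⟨hmem, hbv⟩
        exact hcross a haB hav b0.1 hbB hadj
  set M' : Finset (Sym2 V) := insert s(x, y) (M.image (Sym2.map Subtype.val)) with hM'def
  have hinj : Function.Injective (Sym2.map (Subtype.val : ↥W' → V)) :=
    Sym2.map.injective Subtype.val_injective
  have hnotmem : s(x, y) ∉ M.image (Sym2.map Subtype.val) := by
    intro hmem
    obtain ⟨e0, _, heq⟩ := Finset.mem_image.mp hmem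
    have hx' : x ∈ Sym2.map Subtype.val e0 := by rw [heq]; exact Sym2.mem_mk_left x y
    obtain ⟨a0, _, ha0⟩ := Sym2.mem_map.mp hx'
    exact a0.2 (ha0.symm ▸ (⟨hxB, hxv⟩ : x ∈ B \ {v}))
  have hMmatch : IsInducedMatching G M' := by
    constructor
    · intro e he
      rw [Finset.mem_coe, hM'def, Finset.mem_insert] at he
      rcases he with rfl | he
      · exact G.mem_edgeSet.mpr hxy
      · obtain ⟨e0, he0, rfl⟩ := Finset.mem_image.mp he
        revert he0
        refine Sym2.inductionOn e0 ?_
        intro a0 b0 he0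
        have hadj : H.Adj a0 b0 := H.mem_edgeSet.mp (hM.1 (Finset.mem_coe.mpr he0))
        rw [Sym2.map_pair_eq]
        exact G.mem_edgeSet.mpr hadj
    · intro e he f hf hef a ha b hb
      rw [hM'def, Finset.mem_insert] at he hf
      have factB : ∀ a, a ∈ s(x, y) → ∀ (f0 : Sym2 ↥W') (b : V), b ∈ Sym2.map Subtype.val f0 →
          a ≠ b ∧ ¬ G.Adj a b := by
        intro a ha f0 b hb
        obtain ⟨b0, _, rfl⟩ := Sym2.mem_map.mp hb
        rcases Sym2.mem_iff.mp ha with rfl | rfl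
        · exact hfarpt a hxB hxv hxa b0
        · exact hfarpt a hyB hyv hya b0
      have factA : ∀ e0, e0 ∈ M → ∀ f0, f0 ∈ M → e0 ≠ f0 → ∀ (a : V),
          a ∈ Sym2.map Subtype.val e0 → ∀ b, b ∈ Sym2.map Subtype.val f0 →
          a ≠ b ∧ ¬ G.Adj a b := by
        intro e0 he0 f0 hf0 hne a ha b hb
        obtain ⟨a0, ha0m, rfl⟩ := Sym2.mem_map.mp ha
        obtain ⟨b0, hb0m, rfl⟩ := Sym2.mem_map.mp hb
        obtain ⟨hne', hnadj⟩ := hM.2 e0 he0 f0 hf0 hne a0 ha0m b0 hb0m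
        exact ⟨fun h => hne' (Subtype.val_injective h), fun h => hnadj h⟩
      rcases he with rfl | heI
      · rcases hf with rfl | hfI
        · exact absurd rfl hef
        · obtain ⟨f0, _, rfl⟩ := Finset.mem_image.mp hfI
          exact factB a ha f0 b hb
      · obtain ⟨e0, he0, rfl⟩ := Finset.mem_image.mp heI
        rcases hf with rfl | hfI
        · obtain ⟨hne, hnadj⟩ := factB b hb e0 a ha
          exact ⟨fun h => hne h.symm, fun h => hnadj h.symm⟩
        · obtain ⟨f0, hf0, rfl⟩ := Finset.mem_image.mp hfI
          have hne0 : e0 ≠ f0 := fun h => hef (by rw [h])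
          exact factA e0 he0 f0 hf0 hne0 a ha b hb
  have hMcard' : M'.card = strongMatchingNumber H + 1 := by
    rw [hM'def, Finset.card_insert_of_notMem hnotmem,
      Finset.card_image_of_injective _ hinj, hMcard]
  have hle := smn_ge G hMmatch
  rw [hMcard'] at hle
  omega
end
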